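/- arXiv:1609.08788 — 4 statements merged into one kernel-verified Lean document; each statement's English description precedes it below -/
import Mathlib

section
/- For all integers n ≥ m ≥ 0, the product m!_C · (n−m)!_C divides n!_C in A = F_q[T]; consequently the Carlitz binomial coefficient binom(n,m)_C is an element of A. -/
open Polynomial

/-- `D_i = ∏_{r=0}^{i-1} (T^{q^i} - T^{q^r})`, with `D_0 = 1`. -/
noncomputable def carlitzD (Fq : Type*) [Field Fq] (q i : ℕ) : Polynomial Fq :=
  ∏ r ∈ Finset.range i, (X ^ q ^ i - X ^ q ^ r)

/-- The Carlitz factorial `n!_C = ∏_i D_i^{n_i}`, where `n = Σ n_i q^i` is the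
`q`-adic expansion of `n` (the digit `n_i` is `n / q^i % q`). -/
noncomputable def carlitzFactorial (Fq : Type*) [Field Fq] (q n : ℕ) : Polynomial Fq :=
  ∏ i ∈ Finset.range (n + 1), carlitzD Fq q i ^ (n / q ^ i % q)

/-- The Carlitz binomial coefficient `binom(n,m)_C = n!_C / (m!_C (n-m)!_C)` for `m ≤ n`,
and `0` otherwise. -/
noncomputable def carlitzBinom (Fq : Type*) [Field Fq] (q n m : ℕ) : Polynomial Fq :=
  if m ≤ n then
    carlitzFactorial Fq q n / (carlitzFactorial Fq q m * carlitzFactorial Fq q (n - m))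
  else 0

/-- Base-`q` expansion sums back to the number. -/
lemma sum_digits_aux (q : ℕ) (hq : 2 ≤ q) :
    ∀ t a, a < q ^ t → ∑ j ∈ Finset.range t, q ^ j * (a / q ^ j % q) = a := by
  intro t
  induction t with
  | zero =>
    intro a ha
    simp only [pow_zero, Nat.lt_one_iff] at ha
    simp [ha]
  | succ t ih =>
    intro a ha
    rw [Finset.sum_range_succ']
    have h1 : ∀ j, q ^ (j + 1) * (a / q ^ (j + 1) % q)
        = q * (q ^ j * ((a / q) / q ^ j % q)) := by
      intro j
      rw [pow_succ']
      rw [Nat.div_div_eq_div_mul, ← pow_succ']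
      ring
    simp only [h1, pow_zero, one_mul, Nat.pow_zero, Nat.div_one]
    rw [← Finset.mul_sum, ih (a / q) (by
      rw [Nat.div_lt_iff_lt_mul (by omega : 0 < q)]
      calc a < q ^ (t + 1) := ha
        _ = q ^ t * q := by rw [pow_succ])]
    exact Nat.div_add_mod a q

lemma digit_sum (q : ℕ) (hq : 2 ≤ q) (n k : ℕ) (hk : k ≤ n) :
    ∑ i ∈ Finset.Icc k n, q ^ (i - k) * (n / q ^ i % q) = n / q ^ k := by
  have h0 : Finset.Icc k n = Finset.Ico k (n + 1) := by
    rw [Finset.Ico_add_one_right_eq_Icc]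
  rw [h0, Finset.sum_Ico_eq_sum_range]
  have hterm : ∀ j, q ^ (k + j - k) * (n / q ^ (k + j) % q)
      = q ^ j * ((n / q ^ k) / q ^ j % q) := by
    intro j
    congr 1
    · congr 1; omega
    · rw [Nat.div_div_eq_div_mul, ← pow_add]
  simp only [hterm]
  apply sum_digits_aux q hq
  rw [Nat.div_lt_iff_lt_mul (by positivity : 0 < q ^ k), ← pow_add]
  have : n + 1 - k + k = n + 1 := by omega
  rw [this]
  calc n < 2 ^ (n + 1) := by
        have := (Nat.lt_two_pow_self (n := n))
        calc n < 2 ^ n := this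
          _ ≤ 2 ^ (n + 1) := Nat.pow_le_pow_right (by norm_num) (by omega)
    _ ≤ q ^ (n + 1) := Nat.pow_le_pow_left hq _

section CharStuff

variable {Fq : Type*} [Field Fq]

lemma carlitzD_eq (p s : ℕ) [Fact p.Prime] [CharP Fq p] (i : ℕ) :
    carlitzD Fq (p ^ s) i
      = ∏ k ∈ Finset.Icc 1 i, ((X : Polynomial Fq) ^ (p ^ s) ^ k - X) ^ (p ^ s) ^ (i - k) := by
  haveI : CharP (Polynomial Fq) p := charP_of_injective_ringHom (C_injective (R := Fq)) p
  unfold carlitzD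
  have hterm : ∀ r ∈ Finset.range i,
      (X : Polynomial Fq) ^ (p ^ s) ^ i - X ^ (p ^ s) ^ r
        = ((X : Polynomial Fq) ^ (p ^ s) ^ (i - r) - X) ^ (p ^ s) ^ r := by
    intro r hr
    have hr' : r < i := Finset.mem_range.mp hr
    have hps : (p ^ s) ^ r = p ^ (s * r) := by rw [← pow_mul]
    have e1 : (p ^ s) ^ (i - r) * (p ^ s) ^ r = (p ^ s) ^ i := by
      rw [← pow_add]; congr 1; omega
    calc (X : Polynomial Fq) ^ (p ^ s) ^ i - X ^ (p ^ s) ^ r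
        = ((X : Polynomial Fq) ^ (p ^ s) ^ (i - r)) ^ (p ^ s) ^ r - X ^ (p ^ s) ^ r := by
          conv_rhs => rw [← pow_mul, e1]
      _ = ((X : Polynomial Fq) ^ (p ^ s) ^ (i - r) - X) ^ (p ^ s) ^ r := by
          rw [hps]; exact (sub_pow_char_pow ..).symm
  rw [Finset.prod_congr rfl hterm]
  refine Finset.prod_bij' (fun r _ => i - r) (fun k _ => i - k) ?_ ?_ ?_ ?_ ?_
  · intro r hr
    simp only [Finset.mem_range] at hr
    simp only [Finset.mem_Icc]; omega
  · intro k hk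
    simp only [Finset.mem_Icc] at hk
    simp only [Finset.mem_range]; omega
  · intro r hr; simp only [Finset.mem_range] at hr; omega
  · intro k hk; simp only [Finset.mem_Icc] at hk; omega
  · intro r hr
    simp only [Finset.mem_range] at hr
    have : i - (i - r) = r := by omega
    rw [this]

lemma carlitzFactorial_eq (p s : ℕ) [Fact p.Prime] [CharP Fq p] (hs : 0 < s) (n : ℕ) :
    carlitzFactorial Fq (p ^ s) n
      = ∏ k ∈ Finset.Icc 1 n, ((X : Polynomial Fq) ^ (p ^ s) ^ k - X) ^ (n / (p ^ s) ^ k) := by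
  have hq : 2 ≤ p ^ s := by
    have := (Fact.out : p.Prime).two_le
    calc 2 ≤ p := this
      _ = p ^ 1 := (pow_one p).symm
      _ ≤ p ^ s := Nat.pow_le_pow_right (by omega) hs
  unfold carlitzFactorial
  have step1 : ∀ i ∈ Finset.range (n + 1),
      carlitzD Fq (p ^ s) i ^ (n / (p ^ s) ^ i % (p ^ s))
        = ∏ k ∈ Finset.Icc 1 i, ((X : Polynomial Fq) ^ (p ^ s) ^ k - X)
            ^ ((p ^ s) ^ (i - k) * (n / (p ^ s) ^ i % (p ^ s))) := by
    intro i _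
    rw [carlitzD_eq p s i, ← Finset.prod_pow]
    exact Finset.prod_congr rfl fun k _ => by rw [← pow_mul]
  rw [Finset.prod_congr rfl step1]
  rw [Finset.prod_comm' (t' := Finset.Icc 1 n) (s' := fun k => Finset.Icc k n)
    (by intro i k; simp only [Finset.mem_range, Finset.mem_Icc]; omega)]
  refine Finset.prod_congr rfl fun k hk => ?_
  simp only [Finset.mem_Icc] at hk
  rw [Finset.prod_pow_eq_pow_sum, digit_sum (p ^ s) hq n k hk.2]

lemma carlitzFactorial_ne_zero (p s : ℕ) [Fact p.Prime] [CharP Fq p] (hs : 0 < s) (n : ℕ) :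
    carlitzFactorial Fq (p ^ s) n ≠ 0 := by
  have hq : 2 ≤ p ^ s := by
    have := (Fact.out : p.Prime).two_le
    calc 2 ≤ p := this
      _ = p ^ 1 := (pow_one p).symm
      _ ≤ p ^ s := Nat.pow_le_pow_right (by omega) hs
  rw [carlitzFactorial_eq p s hs n]
  apply Finset.prod_ne_zero_iff.mpr
  intro k hk
  simp only [Finset.mem_Icc] at hk
  apply pow_ne_zero
  intro h
  have hx : (X : Polynomial Fq) ^ (p ^ s) ^ k = X := by
    have := sub_eq_zero.mp h
    exact this
  have := congrArg natDegree hx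
  rw [natDegree_X_pow, natDegree_X] at this
  have h2 : 2 ≤ (p ^ s) ^ k := by
    calc 2 ≤ p ^ s := hq
      _ = (p ^ s) ^ 1 := (pow_one _).symm
      _ ≤ (p ^ s) ^ k := Nat.pow_le_pow_right (by omega) hk.1
  omega

end CharStuff

/-- For `n ≥ m ≥ 0`, `m!_C · (n−m)!_C` divides `n!_C` in `A = F_q[T]`; consequently the
Carlitz binomial coefficient `binom(n,m)_C` is an element of `A` (it times the denominator
recovers `n!_C`). -/
theorem carlitzFactorial_mul_dvd (Fq : Type*) [Field Fq] [Fintype Fq]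
    (p s : ℕ) (hp : p.Prime) (hs : 0 < s) (hcard : Fintype.card Fq = p ^ s)
    (n m : ℕ) (hmn : m ≤ n) :
    (carlitzFactorial Fq (p ^ s) m * carlitzFactorial Fq (p ^ s) (n - m) ∣
      carlitzFactorial Fq (p ^ s) n) ∧
    carlitzBinom Fq (p ^ s) n m *
        (carlitzFactorial Fq (p ^ s) m * carlitzFactorial Fq (p ^ s) (n - m)) =
      carlitzFactorial Fq (p ^ s) n := by
  haveI : Fact p.Prime := ⟨hp⟩
  -- char Fq = p
  haveI hchar : CharP Fq p := by
    obtain ⟨r, hr⟩ := CharP.exists Fq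
    haveI := hr
    obtain ⟨nn, hrp, hcard'⟩ := FiniteField.card Fq r
    have : p = r := by
      have h1 : p ^ s = r ^ (nn : ℕ) := by rw [← hcard, hcard']
      have : p ∣ r ^ (nn : ℕ) := h1 ▸ dvd_pow_self p (by omega)
      have := (Nat.Prime.dvd_of_dvd_pow hp this)
      exact (Nat.prime_dvd_prime_iff_eq hp hrp).mp this
    rwa [this]
  have hq : 2 ≤ p ^ s := by
    calc 2 ≤ p := hp.two_le
      _ = p ^ 1 := (pow_one p).symm
      _ ≤ p ^ s := Nat.pow_le_pow_right hp.pos hs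
  set q := p ^ s with hqdef
  -- extend the products for m and n-m to Icc 1 n
  have hext : ∀ a ≤ n, carlitzFactorial Fq q a
      = ∏ k ∈ Finset.Icc 1 n, ((X : Polynomial Fq) ^ q ^ k - X) ^ (a / q ^ k) := by
    intro a ha
    rw [carlitzFactorial_eq p s hs a]
    apply Finset.prod_subset
    · intro k hk
      simp only [Finset.mem_Icc] at *
      omega
    · intro k hk hk'
      simp only [Finset.mem_Icc] at hk hk'
      have hak : a < q ^ k := by
        have hka : a < k := by omega
        calc a < 2 ^ k := by
              calc a < 2 ^ a := (Nat.lt_two_pow_self (n := a))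
                _ ≤ 2 ^ k := Nat.pow_le_pow_right (by norm_num) (by omega)
          _ ≤ q ^ k := Nat.pow_le_pow_left hq _
      rw [Nat.div_eq_of_lt hak, pow_zero]
  have hdvd : carlitzFactorial Fq q m * carlitzFactorial Fq q (n - m) ∣
      carlitzFactorial Fq q n := by
    rw [hext m hmn, hext (n - m) (by omega), carlitzFactorial_eq p s hs n,
      ← Finset.prod_mul_distrib]
    apply Finset.prod_dvd_prod_of_dvd
    intro k _
    rw [← pow_add]
    apply pow_dvd_pow
    calc m / q ^ k + (n - m) / q ^ k ≤ (m + (n - m)) / q ^ k := Nat.add_div_le_add_div _ _ _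
      _ = n / q ^ k := by congr 1; omega
  refine ⟨hdvd, ?_⟩
  have hne : carlitzFactorial Fq q m * carlitzFactorial Fq q (n - m) ≠ 0 :=
    mul_ne_zero (carlitzFactorial_ne_zero p s hs m) (carlitzFactorial_ne_zero p s hs (n - m))
  rw [carlitzBinom, if_pos hmn]
  rw [mul_comm]
  exact EuclideanDomain.mul_div_cancel' hne hdvd
end

section
/- (Thakur's function field analogue of Lucas' theorem.) Let ℘ be a prime of degree h in A. Let α, β ∈ ℤ_{≥0} with q^h-adic expansions α = Σ_i α_i q^{hi} and β = Σ_i β_i q^{hi}, where 0 ≤ α_i, β_i < q^h. Then binom(α,β)_C ≡ ∏_i binom(α_i,β_i)_C (mod ℘). -/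
open Polynomial

namespace CarlitzAux
open Finset


lemma lt_pow_self' {q i : ℕ} (hq : 2 ≤ q) : i < q ^ i :=
  lt_of_lt_of_le (@Nat.lt_two_pow_self i) (Nat.pow_le_pow_left hq i)

/-- digits sum back: ∑_{t<L} d_{j+t} q^t = n / q^j -/
lemma digit_sum {q : ℕ} (hq : 2 ≤ q) :
    ∀ (L j n : ℕ), n < q ^ (j + L) →
      ∑ t ∈ range L, (n / q ^ (j + t) % q) * q ^ t = n / q ^ j := by
  intro L
  induction L with
  | zero =>
    intro j n hn
    rw [add_zero] at hn
    simp [Nat.div_eq_of_lt hn]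
  | succ L ih =>
    intro j n hn
    rw [Finset.sum_range_succ']
    have h1 : ∀ t, (n / q ^ (j + (t+1)) % q) * q ^ (t+1)
        = q * ((n / q ^ ((j+1) + t) % q) * q ^ t) := by
      intro t
      rw [show j + (t+1) = (j+1) + t by omega, pow_succ]
      ring
    rw [Finset.sum_congr rfl (fun t _ => h1 t), ← Finset.mul_sum,
      ih (j+1) n (by rw [show (j+1) + L = j + (L+1) by omega]; exact hn)]
    have h2 : n / q ^ (j + 1) = n / q ^ j / q := by
      rw [Nat.div_div_eq_div_mul, pow_succ]
    rw [h2, add_zero, pow_zero, mul_one, Nat.div_add_mod]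

/-- digitwise ≤ implies ≤ -/
lemma le_of_digit_le {Q : ℕ} (hQ : 2 ≤ Q) :
    ∀ b a : ℕ, (∀ I, b / Q ^ I % Q ≤ a / Q ^ I % Q) → b ≤ a := by
  intro b
  induction b using Nat.strong_induction_on with
  | _ b ih =>
    intro a hdig
    rcases Nat.eq_zero_or_pos b with hb | hb
    · omega
    · have h0 : b % Q ≤ a % Q := by simpa using hdig 0
      have hdiv : b / Q ≤ a / Q := by
        apply ih (b / Q) (Nat.div_lt_self hb (by omega))
        intro I
        have := hdig (I + 1)
        rwa [pow_succ', ← Nat.div_div_eq_div_mul, ← Nat.div_div_eq_div_mul] at this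
      have hb' := Nat.div_add_mod b Q
      have ha' := Nat.div_add_mod a Q
      have := Nat.mul_le_mul_left Q hdiv
      omega

/-- no carries at I, I+1 imply digits add at I -/
lemma digit_add {Q : ℕ} (hQ : 2 ≤ Q) {a b I : ℕ}
    (h0 : a % Q ^ I + b % Q ^ I < Q ^ I)
    (h1 : a % Q ^ (I+1) + b % Q ^ (I+1) < Q ^ (I+1)) :
    (a + b) / Q ^ I % Q = a / Q ^ I % Q + b / Q ^ I % Q := by
  have hp : 0 < Q ^ I := Nat.pow_pos (by omega)
  have hd0 : (a + b) / Q ^ I = a / Q ^ I + b / Q ^ I := by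
    rw [Nat.add_div hp, if_neg (by omega), add_zero]
  have hd1 : (a + b) / Q ^ (I+1) = a / Q ^ (I+1) + b / Q ^ (I+1) := by
    rw [Nat.add_div (Nat.pow_pos (by omega)), if_neg (by omega), add_zero]
  have e : ∀ x : ℕ, x / Q ^ (I+1) = x / Q ^ I / Q := by
    intro x; rw [Nat.div_div_eq_div_mul, pow_succ]
  rw [e, e, e, hd0] at hd1
  -- hd1 : (a/Q^I + b/Q^I)/Q = a/Q^I/Q + b/Q^I/Q
  have := Nat.add_div (a := a / Q ^ I) (b := b / Q ^ I) (show 0 < Q by omega)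
  have hlt : a / Q ^ I % Q + b / Q ^ I % Q < Q := by
    by_contra hcon
    rw [this, if_pos (by omega)] at hd1
    omega
  rw [hd0, Nat.add_mod, Nat.mod_eq_of_lt hlt]

/-- digitwise ≤ (of b vs a+b) implies no carries -/
lemma no_carry_of_digit_le {Q a b : ℕ} (hQ : 2 ≤ Q)
    (hdig : ∀ I, b / Q ^ I % Q ≤ (a + b) / Q ^ I % Q) :
    ∀ I, a % Q ^ I + b % Q ^ I < Q ^ I := by
  intro I
  induction I with
  | zero => simp [Nat.mod_one]
  | succ I ihI =>
    by_contra hc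
    push_neg at hc
    have hp : 0 < Q ^ I := Nat.pow_pos (by omega)
    have hma : a % Q ^ (I+1) = a % Q ^ I + Q ^ I * (a / Q ^ I % Q) := by
      rw [pow_succ, Nat.mod_mul]
    have hmb : b % Q ^ (I+1) = b % Q ^ I + Q ^ I * (b / Q ^ I % Q) := by
      rw [pow_succ, Nat.mod_mul]
    set A := a / Q ^ I % Q with hA
    set B := b / Q ^ I % Q with hB
    have hAQ : A < Q := Nat.mod_lt _ (by omega)
    have hBQ : B < Q := Nat.mod_lt _ (by omega)
    -- Q ≤ A + B
    have hQle : Q ≤ A + B := by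
      by_contra hcon
      push_neg at hcon
      have : Q ^ I * Q ≤ a % Q ^ I + Q ^ I * A + (b % Q ^ I + Q ^ I * B) := by
        rw [← pow_succ]; rw [hma, hmb] at hc; exact hc
      have h2 : Q ^ I * (A + B) + Q ^ I ≤ Q ^ I * Q := by
        have : A + B + 1 ≤ Q := by omega
        calc Q ^ I * (A + B) + Q ^ I = Q ^ I * (A + B + 1) := by ring
          _ ≤ Q ^ I * Q := Nat.mul_le_mul_left _ this
      have h3 : Q ^ I * (A+B) = Q ^ I * A + Q ^ I * B := by ring
      omega
    -- digit of a+b at I is A + B - Q < B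
    have hd0 : (a + b) / Q ^ I = a / Q ^ I + b / Q ^ I := by
      rw [Nat.add_div hp, if_neg (by omega), add_zero]
    have hsa := Nat.div_add_mod (a / Q ^ I) Q
    have hsb := Nat.div_add_mod (b / Q ^ I) Q
    have hmod : (a + b) / Q ^ I % Q = (A + B) % Q := by
      rw [hd0, ← hsa, ← hsb, ← hA, ← hB]
      rw [show Q * (a / Q ^ I / Q) + A + (Q * (b / Q ^ I / Q) + B)
          = Q * (a / Q ^ I / Q + b / Q ^ I / Q) + (A + B) by ring]
      rw [Nat.mul_add_mod]
    have hABmod : (A + B) % Q = A + B - Q := by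
      rw [Nat.mod_eq_sub_mod hQle, Nat.mod_eq_of_lt (by omega)]
    have := hdig I
    rw [hmod, hABmod] at this
    omega

lemma carry_aux {m n A B ra rb : ℕ} (hA : A < n) (hB : B < n) (hr : ra + rb < m) :
    (m * n ≤ ra + m * A + (rb + m * B)) ↔ n ≤ A + B := by
  constructor
  · intro hc
    by_contra hcon
    push_neg at hcon
    have h2 : m * (A + B) + m ≤ m * n := by
      have h1 : A + B + 1 ≤ n := by omega
      calc m * (A + B) + m = m * (A + B + 1) := by ring
        _ ≤ m * n := Nat.mul_le_mul_left _ h1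
    have h3 : m * (A + B) = m * A + m * B := by ring
    omega
  · intro hb
    have h2 : m * n ≤ m * (A + B) := Nat.mul_le_mul_left _ hb
    have h3 : m * (A + B) = m * A + m * B := by ring
    omega

/-- carry at position H*I+j (0<j≤H) iff carry in the I-th block, assuming no carry at H*I -/
lemma carry_block {q : ℕ} (hq : 2 ≤ q) {H I j a b : ℕ} (hj : 0 < j) (hjh : j ≤ H)
    (hnoc : a % q ^ (H*I) + b % q ^ (H*I) < q ^ (H*I)) :
    (q ^ (H*I+j) ≤ a % q ^ (H*I+j) + b % q ^ (H*I+j)) ↔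
    (q ^ j ≤ (a / q ^ (H*I) % q ^ H) % q ^ j + (b / q ^ (H*I) % q ^ H) % q ^ j) := by
  have hqj : 0 < q ^ j := Nat.pow_pos (by omega)
  have hsplit : ∀ x : ℕ, x % q ^ (H*I+j)
      = x % q ^ (H*I) + q ^ (H*I) * (x / q ^ (H*I) % q ^ j) := by
    intro x; rw [pow_add, Nat.mod_mul]
  have hmm : ∀ x : ℕ, (x / q ^ (H*I) % q ^ H) % q ^ j = x / q ^ (H*I) % q ^ j := fun x =>
    Nat.mod_mod_of_dvd _ (pow_dvd_pow q hjh)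
  rw [hmm, hmm, hsplit, hsplit, pow_add]
  exact carry_aux (Nat.mod_lt _ hqj) (Nat.mod_lt _ hqj) hnoc

/-- periodic mod -/
lemma period_mod {γ : Sort*} (f : ℕ → γ) {H : ℕ} (hH : 0 < H)
    (hf : ∀ i, f (i + H) = f i) : ∀ k, f k = f (k % H) := by
  intro k
  induction k using Nat.strong_induction_on with
  | _ k ih =>
    rcases lt_or_ge k H with hk | hk
    · rw [Nat.mod_eq_of_lt hk]
    · calc f k = f ((k - H) + H) := by rw [Nat.sub_add_cancel hk]
        _ = f (k - H) := hf _
        _ = f ((k - H) % H) := ih _ (by omega)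
        _ = f (k % H) := by rw [← Nat.mod_eq_sub_mod hk]

lemma prod_range_hmul {M : Type*} [CommMonoid M] (f : ℕ → M) (H R : ℕ) :
    ∏ i ∈ range (H * R), f i = ∏ I ∈ range R, ∏ j ∈ range H, f (H * I + j) := by
  induction R with
  | zero => simp
  | succ R ih =>
    rw [Nat.mul_succ, Finset.prod_range_add, ih, Finset.prod_range_succ]



/-- the bracket `[i] = X^{q^i} - X` -/
noncomputable def br (Fq : Type*) [Field Fq] (q i : ℕ) : Polynomial Fq := X ^ q ^ i - X

variable {Fq : Type*} [Field Fq]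

lemma br_zero (q : ℕ) : br Fq q 0 = 0 := by simp [br]

lemma X_pow_sub_X_pow_ne_zero {a b : ℕ} (hab : b < a) : (X ^ a - X ^ b : Polynomial Fq) ≠ 0 := by
  intro h0
  have h1 := sub_eq_zero.mp h0
  have ha : a = b := by
    have h2 := congrArg natDegree h1
    rwa [natDegree_X_pow, natDegree_X_pow] at h2
  omega

lemma br_ne_zero {q : ℕ} (hq : 2 ≤ q) {i : ℕ} (hi : 0 < i) : br Fq q i ≠ 0 := by
  have e : br Fq q i = X ^ q ^ i - X ^ 1 := by rw [br, pow_one]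
  rw [e]
  exact X_pow_sub_X_pow_ne_zero (Nat.one_lt_pow (by omega) (by omega))

lemma carlitzD_ne_zero {q : ℕ} (hq : 2 ≤ q) (i : ℕ) : carlitzD Fq q i ≠ 0 := by
  unfold carlitzD
  rw [Finset.prod_ne_zero_iff]
  intro r hr
  exact X_pow_sub_X_pow_ne_zero (Nat.pow_lt_pow_right (by omega) (Finset.mem_range.mp hr))

lemma carlitzFactorial_ne_zero {q : ℕ} (hq : 2 ≤ q) (n : ℕ) : carlitzFactorial Fq q n ≠ 0 := by
  unfold carlitzFactorial
  rw [Finset.prod_ne_zero_iff]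
  exact fun i _ => pow_ne_zero _ (carlitzD_ne_zero hq i)

variable (p s : ℕ) [Fact p.Prime] [CharP Fq p]

lemma carlitzD_eq_prod (hs : 0 < s) (i : ℕ) :
    carlitzD Fq (p ^ s) i = ∏ r ∈ range i, (br Fq (p ^ s) (r + 1)) ^ ((p ^ s) ^ (i - 1 - r)) := by
  unfold carlitzD
  rw [← Finset.prod_range_reflect]
  apply Finset.prod_congr rfl
  intro r hr
  rw [Finset.mem_range] at hr
  have e1 : ((p ^ s : ℕ)) ^ (i - 1 - r) = p ^ (s * (i - 1 - r)) := by rw [← pow_mul]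
  have e2 : (p ^ s) ^ (r + 1) * p ^ (s * (i - 1 - r)) = (p ^ s) ^ i := by
    rw [← pow_mul p s (r + 1), ← pow_add, ← Nat.mul_add, pow_mul]
    congr 1
    omega
  unfold br
  conv_rhs => rw [e1, sub_pow_char_pow, ← pow_mul, e2, ← e1]

lemma prod_D_ext {q : ℕ} (hq : 2 ≤ q) (n : ℕ) {A B : ℕ} (hA : n < q ^ A) (hAB : A ≤ B) :
    ∏ i ∈ range B, carlitzD Fq q i ^ (n / q ^ i % q)
      = ∏ i ∈ range A, carlitzD Fq q i ^ (n / q ^ i % q) := by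
  symm
  apply Finset.prod_subset (Finset.range_subset_range.mpr hAB)
  intro i hiB hiA
  rw [Finset.mem_range] at hiB hiA
  have hAi : A ≤ i := by omega
  have hni : n < q ^ i := lt_of_lt_of_le hA (Nat.pow_le_pow_right (by omega) hAi)
  rw [Nat.div_eq_of_lt hni, Nat.zero_mod, pow_zero]

lemma factorial_prod_ext {q : ℕ} (hq : 2 ≤ q) (n : ℕ) {M : ℕ} (hM : n < q ^ M) :
    carlitzFactorial Fq q n = ∏ i ∈ range M, carlitzD Fq q i ^ (n / q ^ i % q) := by
  unfold carlitzFactorial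
  have h1 : n < q ^ (n + 1) :=
    lt_of_lt_of_le (lt_pow_self' hq) (Nat.pow_le_pow_right (by omega) (by omega))
  rw [show (∏ i ∈ range (n+1), carlitzD Fq q i ^ (n / q ^ i % q))
      = ∏ i ∈ range (max (n+1) M), carlitzD Fq q i ^ (n / q ^ i % q) from
      (prod_D_ext hq n h1 (le_max_left _ _)).symm,
    prod_D_ext hq n hM (le_max_right _ _)]

/-- Legendre-style formula: `n!_C = ∏_{j<M} [j+1]^{⌊n/q^{j+1}⌋}` -/
lemma factorial_eq_prod_br (hs : 0 < s) (n M : ℕ) (hn : n < (p ^ s) ^ (M + 1)) :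
    carlitzFactorial Fq (p ^ s) n
      = ∏ j ∈ range M, (br Fq (p ^ s) (j + 1)) ^ (n / (p ^ s) ^ (j + 1)) := by
  have hq : 2 ≤ p ^ s := by
    calc 2 ≤ p := (Fact.out : p.Prime).two_le
      _ = p ^ 1 := (pow_one p).symm
      _ ≤ p ^ s := Nat.pow_le_pow_right (by have := (Fact.out : p.Prime).two_le; omega) hs
  rw [factorial_prod_ext hq n hn]
  have step1 : ∀ i ∈ range (M + 1),
      carlitzD Fq (p ^ s) i ^ (n / (p ^ s) ^ i % (p ^ s))
        = ∏ r ∈ range i, (br Fq (p ^ s) (r + 1))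
            ^ ((n / (p ^ s) ^ i % (p ^ s)) * (p ^ s) ^ (i - 1 - r)) := by
    intro i _
    rw [carlitzD_eq_prod p s hs i, ← Finset.prod_pow]
    apply Finset.prod_congr rfl
    intro r _
    rw [← pow_mul, Nat.mul_comm]
  rw [Finset.prod_congr rfl step1]
  rw [Finset.prod_comm' (t' := range M) (s' := fun r => Ico (r + 1) (M + 1))
    (by intro i r; simp only [Finset.mem_range, Finset.mem_Ico]; omega)]
  apply Finset.prod_congr rfl
  intro r hr
  rw [Finset.mem_range] at hr
  rw [Finset.prod_pow_eq_pow_sum]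
  congr 1
  rw [Finset.sum_Ico_eq_sum_range]
  have e : ∀ t, n / (p ^ s) ^ (r + 1 + t) % (p ^ s) * (p ^ s) ^ (r + 1 + t - 1 - r)
      = n / (p ^ s) ^ ((r + 1) + t) % (p ^ s) * (p ^ s) ^ t := by
    intro t; congr 2; omega
  rw [Finset.sum_congr rfl (fun t _ => e t)]
  rw [show M + 1 - (r + 1) = M - r by omega]
  exact digit_sum hq (M - r) (r + 1) n
    (by rw [show r + 1 + (M - r) = M + 1 by omega]; exact hn)



lemma two_le_q (hs : 0 < s) : 2 ≤ p ^ s := by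
  have h2 : 2 ≤ p := (Fact.out : p.Prime).two_le
  calc 2 ≤ p := h2
    _ = p ^ 1 := (pow_one p).symm
    _ ≤ p ^ s := Nat.pow_le_pow_right (by omega) hs

/-- The key product formula: `binom(n,b)_C = ∏_{i<M} [i]^{carry_i}` where `carry_i = 1`
iff there is a carry at position `i` in the base-`q` addition of `n-b` and `b`. -/
lemma binom_eq_prod_br (hs : 0 < s) {n b M : ℕ} (hb : b ≤ n) (hM : 0 < M)
    (hn : n < (p ^ s) ^ M) :
    carlitzBinom Fq (p ^ s) n b
      = ∏ i ∈ range M, (br Fq (p ^ s) i)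
          ^ (if (p ^ s) ^ i ≤ (n - b) % (p ^ s) ^ i + b % (p ^ s) ^ i then 1 else 0) := by
  obtain ⟨M', rfl⟩ : ∃ M', M = M' + 1 := ⟨M - 1, by omega⟩
  have hq2 : 2 ≤ p ^ s := two_le_q p s hs
  rw [Finset.prod_range_succ']
  have h0 : (br Fq (p ^ s) 0)
      ^ (if (p ^ s) ^ 0 ≤ (n - b) % (p ^ s) ^ 0 + b % (p ^ s) ^ 0 then 1 else 0) = 1 := by
    simp [Nat.mod_one]
  rw [h0, mul_one]
  have hbn : b < (p ^ s) ^ (M' + 1) := lt_of_le_of_lt hb hn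
  have han : n - b < (p ^ s) ^ (M' + 1) := lt_of_le_of_lt (Nat.sub_le _ _) hn
  have key : (carlitzFactorial Fq (p ^ s) b * carlitzFactorial Fq (p ^ s) (n - b)) *
      (∏ j ∈ range M', (br Fq (p ^ s) (j + 1))
        ^ (if (p ^ s) ^ (j+1) ≤ (n - b) % (p ^ s) ^ (j+1) + b % (p ^ s) ^ (j+1) then 1 else 0))
      = carlitzFactorial Fq (p ^ s) n := by
    rw [factorial_eq_prod_br p s hs b M' hbn, factorial_eq_prod_br p s hs (n-b) M' han,
      factorial_eq_prod_br p s hs n M' hn, ← Finset.prod_mul_distrib,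
      ← Finset.prod_mul_distrib]
    apply Finset.prod_congr rfl
    intro j _
    rw [← pow_add, ← pow_add]
    congr 1
    have hpos : 0 < (p ^ s) ^ (j+1) := Nat.pow_pos (by omega)
    have hdiv : n / (p ^ s) ^ (j+1)
        = (n - b) / (p ^ s) ^ (j+1) + b / (p ^ s) ^ (j+1)
          + (if (p ^ s) ^ (j+1) ≤ (n - b) % (p ^ s) ^ (j+1) + b % (p ^ s) ^ (j+1)
              then 1 else 0) := by
      conv_lhs => rw [show n = (n - b) + b by omega]
      exact Nat.add_div hpos
    rw [hdiv]
    set c := (if (p ^ s) ^ (j+1) ≤ (n - b) % (p ^ s) ^ (j+1) + b % (p ^ s) ^ (j+1)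
        then 1 else 0) with hc
    omega
  have hne : carlitzFactorial Fq (p ^ s) b * carlitzFactorial Fq (p ^ s) (n - b) ≠ 0 :=
    mul_ne_zero (carlitzFactorial_ne_zero hq2 b) (carlitzFactorial_ne_zero hq2 (n - b))
  unfold carlitzBinom
  rw [if_pos hb]
  exact (EuclideanDomain.eq_div_of_mul_eq_right hne key).symm

end CarlitzAux

open CarlitzAux in
lemma CarlitzAux.dvd_br {Fq : Type*} [Field Fq] [Fintype Fq] (℘ : Polynomial Fq)
    (hirr : Irreducible ℘) :
    ℘ ∣ (X ^ (Fintype.card Fq) ^ ℘.natDegree - X) := by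
  haveI := Fact.mk hirr
  classical
  have b : Module.Basis (Fin ℘.natDegree) Fq (AdjoinRoot ℘) := (AdjoinRoot.powerBasis hirr.ne_zero).basis
  haveI : Fintype (AdjoinRoot ℘) := Module.fintypeOfFintype b
  have hcard : Fintype.card (AdjoinRoot ℘) = (Fintype.card Fq) ^ ℘.natDegree := by
    rw [Module.card_fintype b]
    simp [AdjoinRoot.powerBasis]
  have hx : (AdjoinRoot.root ℘) ^ (Fintype.card Fq) ^ ℘.natDegree = AdjoinRoot.root ℘ := by
    rw [← hcard]; exact FiniteField.pow_card _
  rw [← AdjoinRoot.mk_eq_zero (f := ℘)]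
  rw [map_sub, map_pow, AdjoinRoot.mk_X, hx, sub_self]

/-- Thakur's function field analogue of Lucas' theorem: if `℘` is a prime of degree `h`
in `A = F_q[T]`, and `α = Σ α_i q^{hi}`, `β = Σ β_i q^{hi}` are the `q^h`-adic expansions
(the digit at position `i` being `α / (q^h)^i % q^h`), then
`binom(α,β)_C ≡ ∏_i binom(α_i,β_i)_C (mod ℘)`. -/
theorem carlitz_lucas (Fq : Type*) [Field Fq] [Fintype Fq]
    (p s : ℕ) (hp : p.Prime) (hs : 0 < s) (hcard : Fintype.card Fq = p ^ s)
    (h : ℕ) (℘ : Polynomial Fq) (hirr : Irreducible ℘) (hdeg : ℘.natDegree = h)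
    (α β : ℕ) :
    ℘ ∣ (carlitzBinom Fq (p ^ s) α β -
      ∏ i ∈ Finset.range (α + β + 1),
        carlitzBinom Fq (p ^ s) (α / ((p ^ s) ^ h) ^ i % (p ^ s) ^ h)
          (β / ((p ^ s) ^ h) ^ i % (p ^ s) ^ h)) := by
  classical
  haveI hfp : Fact p.Prime := ⟨hp⟩
  haveI hchar : CharP Fq p := by
    obtain ⟨r, hr⟩ := CharP.exists Fq
    haveI := hr
    have hr2 : r.Prime := CharP.char_is_prime Fq r
    haveI := Fact.mk hr2
    obtain ⟨n, hcard'⟩ := FiniteField.card Fq r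
    have hpr : p = r := by
      have hdvd : p ∣ r ^ (n : ℕ) := by
        rw [← hcard'.2, hcard]
        exact dvd_pow_self p (by omega)
      exact (Nat.prime_dvd_prime_iff_eq hp hr2).mp (hp.dvd_of_dvd_pow hdvd)
    rwa [hpr]
  have hq2 : 2 ≤ p ^ s := CarlitzAux.two_le_q p s hs
  have hh : 0 < h := hdeg ▸ hirr.natDegree_pos
  have hQ2 : 2 ≤ (p ^ s) ^ h := le_trans hq2 (Nat.le_self_pow (by omega) _)
  set R := α + β + 1 with hRdef
  -- pass to quotient ring
  rw [← Ideal.mem_span_singleton, ← Ideal.Quotient.eq]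
  -- bracket congruences
  have hdvd_h : ℘ ∣ CarlitzAux.br Fq (p ^ s) h := by
    have H := CarlitzAux.dvd_br ℘ hirr
    rw [hcard, hdeg] at H
    exact H
  have hperiod : ∀ i, Ideal.Quotient.mk (Ideal.span {℘}) (CarlitzAux.br Fq (p ^ s) (i + h))
      = Ideal.Quotient.mk (Ideal.span {℘}) (CarlitzAux.br Fq (p ^ s) i) := by
    intro i
    rw [Ideal.Quotient.eq, Ideal.mem_span_singleton]
    have e1 : ((p ^ s : ℕ)) ^ i = p ^ (s * i) := by rw [← pow_mul]
    have e2 : ((p ^ s : ℕ)) ^ h * p ^ (s * i) = p ^ (s * (i + h)) := by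
      rw [← pow_mul, ← pow_add, ← Nat.mul_add, Nat.add_comm h i]
    have e3 : ((p ^ s : ℕ)) ^ (i + h) = p ^ (s * (i + h)) := by rw [← pow_mul]
    have heq : CarlitzAux.br Fq (p ^ s) (i + h) - CarlitzAux.br Fq (p ^ s) i
        = (CarlitzAux.br Fq (p ^ s) h) ^ ((p ^ s) ^ i) := by
      unfold CarlitzAux.br
      rw [e3, e1, sub_pow_char_pow, ← pow_mul X ((p ^ s) ^ h) (p ^ (s * i)), e2]
      ring
    rw [heq]
    exact hdvd_h.pow (by positivity)
  have hmod : ∀ k, Ideal.Quotient.mk (Ideal.span {℘}) (CarlitzAux.br Fq (p ^ s) k)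
      = Ideal.Quotient.mk (Ideal.span {℘}) (CarlitzAux.br Fq (p ^ s) (k % h)) :=
    CarlitzAux.period_mod _ hh hperiod
  have hbr0 : Ideal.Quotient.mk (Ideal.span {℘}) (CarlitzAux.br Fq (p ^ s) 0) = 0 := by
    rw [CarlitzAux.br_zero, map_zero]
  -- global bound
  have hαR : α < (p ^ s) ^ (h * R) := by
    have h1 : α < h * R := by
      have : R ≤ h * R := Nat.le_mul_of_pos_left R hh
      omega
    exact lt_trans h1 (CarlitzAux.lt_pow_self' hq2)
  by_cases hP : ∀ I, β / ((p ^ s) ^ h) ^ I % (p ^ s) ^ h ≤ α / ((p ^ s) ^ h) ^ I % (p ^ s) ^ h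
  · -- no-carry case
    have hβα : β ≤ α := CarlitzAux.le_of_digit_le hQ2 β α hP
    have hP' : ∀ I, β / ((p ^ s) ^ h) ^ I % (p ^ s) ^ h
        ≤ ((α - β) + β) / ((p ^ s) ^ h) ^ I % (p ^ s) ^ h := by
      intro I; rw [Nat.sub_add_cancel hβα]; exact hP I
    have hnc : ∀ I, (α - β) % ((p ^ s) ^ h) ^ I + β % ((p ^ s) ^ h) ^ I < ((p ^ s) ^ h) ^ I :=
      CarlitzAux.no_carry_of_digit_le hQ2 hP'
    have hdigadd : ∀ I, α / ((p ^ s) ^ h) ^ I % (p ^ s) ^ h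
        = (α - β) / ((p ^ s) ^ h) ^ I % (p ^ s) ^ h + β / ((p ^ s) ^ h) ^ I % (p ^ s) ^ h := by
      intro I
      have H := CarlitzAux.digit_add hQ2 (hnc I) (hnc (I + 1))
      rwa [Nat.sub_add_cancel hβα] at H
    have hnc' : ∀ I, (α - β) % (p ^ s) ^ (h * I) + β % (p ^ s) ^ (h * I) < (p ^ s) ^ (h * I) := by
      intro I; rw [pow_mul]; exact hnc I
    rw [CarlitzAux.binom_eq_prod_br p s hs hβα (by positivity) hαR]
    rw [map_prod, CarlitzAux.prod_range_hmul, map_prod]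
    apply Finset.prod_congr rfl
    intro I hI
    have hβI : β / ((p ^ s) ^ h) ^ I % (p ^ s) ^ h ≤ α / ((p ^ s) ^ h) ^ I % (p ^ s) ^ h := hP I
    have hαI : α / ((p ^ s) ^ h) ^ I % (p ^ s) ^ h < (p ^ s) ^ h := Nat.mod_lt _ (by omega)
    rw [CarlitzAux.binom_eq_prod_br p s hs hβI hh hαI, map_prod]
    apply Finset.prod_congr rfl
    intro j hj
    rw [Finset.mem_range] at hj
    rw [map_pow, map_pow]
    rcases Nat.eq_zero_or_pos j with hj0 | hjpos
    · subst hj0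
      rw [add_zero, pow_zero, Nat.mod_one, Nat.mod_one]
      rw [if_neg (by have := hnc' I; omega), if_neg (by omega), pow_zero, pow_zero]
    · -- carry equivalence
      have hjh : j ≤ h := by omega
      have hiff := CarlitzAux.carry_block hq2 hjpos hjh (hnc' I) (a := α - β) (b := β)
      have ha_digit : (α - β) / (p ^ s) ^ (h * I) % (p ^ s) ^ h
          = α / ((p ^ s) ^ h) ^ I % (p ^ s) ^ h - β / ((p ^ s) ^ h) ^ I % (p ^ s) ^ h := by
        rw [pow_mul]
        have := hdigadd I
        omega
      have hb_digit : β / (p ^ s) ^ (h * I) % (p ^ s) ^ h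
          = β / ((p ^ s) ^ h) ^ I % (p ^ s) ^ h := by rw [pow_mul]
      rw [ha_digit, hb_digit] at hiff
      have hidx : (h * I + j) % h = j := by rw [Nat.mul_add_mod, Nat.mod_eq_of_lt hj]
      rw [if_congr hiff rfl rfl, hmod (h * I + j), hidx]
  · -- carry case: both sides vanish mod ℘
    push_neg at hP
    obtain ⟨I₁, hI₁⟩ := hP
    -- RHS is zero
    have hβdig : 0 < β / ((p ^ s) ^ h) ^ I₁ % (p ^ s) ^ h :=
      lt_of_le_of_lt (Nat.zero_le _) hI₁
    have hQβ : ((p ^ s) ^ h) ^ I₁ ≤ β := by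
      by_contra hcon
      push_neg at hcon
      rw [Nat.div_eq_of_lt hcon] at hβdig
      simp at hβdig
    have hI₁R : I₁ ∈ Finset.range R := by
      rw [Finset.mem_range]
      have h1 : I₁ < ((p ^ s) ^ h) ^ I₁ := CarlitzAux.lt_pow_self' hQ2
      omega
    have hzero : carlitzBinom Fq (p ^ s) (α / ((p ^ s) ^ h) ^ I₁ % (p ^ s) ^ h)
        (β / ((p ^ s) ^ h) ^ I₁ % (p ^ s) ^ h) = 0 := by
      unfold carlitzBinom
      rw [if_neg (Nat.not_le.mpr hI₁)]
    rw [Finset.prod_eq_zero hI₁R hzero, map_zero]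
    by_cases hβα : β ≤ α
    · -- find a carry at a block boundary
      have hex : ∃ I, ((p ^ s) ^ h) ^ I ≤ (α - β) % ((p ^ s) ^ h) ^ I + β % ((p ^ s) ^ h) ^ I := by
        by_contra hnc
        push_neg at hnc
        have H := CarlitzAux.digit_add hQ2 (hnc I₁) (hnc (I₁ + 1))
        rw [Nat.sub_add_cancel hβα] at H
        exact Nat.not_le.mpr hI₁ (le_trans (Nat.le_add_left _ _) H.symm.le)
      obtain ⟨I₀, hI₀⟩ := hex
      have hI₀pos : 0 < I₀ := by
        by_contra hcon
        push_neg at hcon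
        interval_cases I₀
        simp [Nat.mod_one] at hI₀
      have hQα : ((p ^ s) ^ h) ^ I₀ ≤ α := by
        have h1 : (α - β) % ((p ^ s) ^ h) ^ I₀ ≤ α - β := Nat.mod_le _ _
        have h2 : β % ((p ^ s) ^ h) ^ I₀ ≤ β := Nat.mod_le _ _
        omega
      have hI₀R : h * I₀ ∈ Finset.range (h * R) := by
        rw [Finset.mem_range]
        have h1 : I₀ < ((p ^ s) ^ h) ^ I₀ := CarlitzAux.lt_pow_self' hQ2
        have h2 : I₀ < R := by omega
        exact (Nat.mul_lt_mul_left hh).mpr h2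
      rw [CarlitzAux.binom_eq_prod_br p s hs hβα (by positivity) hαR, map_prod]
      apply Finset.prod_eq_zero hI₀R
      have hcond : (p ^ s) ^ (h * I₀) ≤ (α - β) % (p ^ s) ^ (h * I₀) + β % (p ^ s) ^ (h * I₀) := by
        rw [pow_mul]
        exact hI₀
      rw [map_pow, if_pos hcond, pow_one, hmod (h * I₀), Nat.mul_mod_right, hbr0]
    · unfold carlitzBinom
      rw [if_neg hβα, map_zero]
end

section
/- Let ℘ be a prime of degree h ≥ 1 in A. For all ᾱ, β̄ ∈ S_h^ω and all u ∈ ℤ_{≥0}, one has binom(z_{ᾱ⋆β̄}(h), u)_C ≡ binom(z_ᾱ(h), u_{(deg(ᾱ)−1, 0)})_C · binom(z_β̄(h), u_{(deg(ᾱ))})_C (mod ℘). -/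
open Polynomial

/-- `u_{(r,s)} = Σ_{i=0}^{r} u_{s+i} Q^i`, where `u_j = u / Q^j % Q` is the `j`-th digit of
`u` in base `Q` (here `Q = q^h`). -/
def digitTrunc (Q u r s : ℕ) : ℕ :=
  ∑ i ∈ Finset.range (r + 1), u / Q ^ (s + i) % Q * Q ^ i

/-- `u_{(s)} = Σ_{i≥0} u_{s+i} Q^i`, where `u_j = u / Q^j % Q` is the `j`-th digit of `u`
in base `Q`. -/
def digitShift (Q u s : ℕ) : ℕ :=
  ∑ i ∈ Finset.range (u + 1), u / Q ^ (s + i) % Q * Q ^ i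

/-! ### Auxiliary definitions and lemmas -/

open Finset

/-- The carry indicator at position `i` when adding `m` and `n - m` in base `q`. -/
def carlitzCarry (q n m i : ℕ) : ℕ := if n % q ^ (i + 1) < m % q ^ (i + 1) then 1 else 0

section helpers

variable {Fq : Type*} [Field Fq]

lemma X_pow_sub_X_pow_ne_zero {a b : ℕ} (hab : a < b) : (X : Polynomial Fq) ^ b - X ^ a ≠ 0 := by
  intro hE
  have h1 : (X : Polynomial Fq) ^ b = X ^ a := sub_eq_zero.mp hE
  have h2 := congrArg natDegree h1
  rw [natDegree_X_pow, natDegree_X_pow] at h2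
  omega

lemma carlitzD_ne_zero {q : ℕ} (hq : 2 ≤ q) (i : ℕ) : carlitzD Fq q i ≠ 0 := by
  unfold carlitzD
  refine Finset.prod_ne_zero_iff.2 fun r hr => ?_
  exact X_pow_sub_X_pow_ne_zero (Nat.pow_lt_pow_right (by omega) (mem_range.1 hr))

lemma carlitzFactorial_ne_zero_s3 {q : ℕ} (hq : 2 ≤ q) (n : ℕ) : carlitzFactorial Fq q n ≠ 0 := by
  unfold carlitzFactorial
  exact Finset.prod_ne_zero_iff.2 fun i _ => pow_ne_zero _ (carlitzD_ne_zero hq i)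

lemma carlitzD_succ {p : ℕ} [CharP Fq p] (hp : p.Prime) (s i : ℕ) :
    carlitzD Fq (p ^ s) (i + 1)
      = (X ^ (p ^ s) ^ (i + 1) - X) * (carlitzD Fq (p ^ s) i) ^ p ^ s := by
  haveI : Fact p.Prime := ⟨hp⟩
  unfold carlitzD
  have hstep : ∀ r : ℕ, (X : Polynomial Fq) ^ (p ^ s) ^ (i + 1) - X ^ (p ^ s) ^ (r + 1)
      = (X ^ (p ^ s) ^ i - X ^ (p ^ s) ^ r) ^ p ^ s := by
    intro r
    rw [sub_pow_char_pow]
    congr 1 <;> (symm; rw [← pow_mul, ← pow_succ])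
  rw [Finset.prod_range_succ', mul_comm]
  congr 1
  · rw [pow_zero, pow_one]
  · rw [Finset.prod_congr rfl fun r _ => hstep r, Finset.prod_pow]

lemma lt_pow_of_lt {q n N : ℕ} (hq : 2 ≤ q) (h : n < N) : n < q ^ N :=
  lt_of_lt_of_le (Nat.lt_two_pow_self (n := n))
    (le_trans (Nat.pow_le_pow_right (by omega) (by omega)) (Nat.pow_le_pow_left hq N))

lemma carlitzFactorial_eq_prod {q : ℕ} (hq : 2 ≤ q) {n N : ℕ} (hN : n < N) :
    carlitzFactorial Fq q n = ∏ i ∈ range N, carlitzD Fq q i ^ (n / q ^ i % q) := by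
  unfold carlitzFactorial
  rcases le_or_gt N (n + 1) with hle | hlt
  · symm
    apply Finset.prod_subset (range_subset_range.2 (by omega))
    intro i hi hni
    have : n < q ^ i := lt_pow_of_lt hq (by simp at hi hni ⊢; omega)
    rw [Nat.div_eq_of_lt this, Nat.zero_mod, pow_zero]
  · apply Finset.prod_subset (range_subset_range.2 (by omega))
    intro i hi hni
    have : n < q ^ i := lt_pow_of_lt hq (by simp at hi hni ⊢; omega)
    rw [Nat.div_eq_of_lt this, Nat.zero_mod, pow_zero]

lemma carry_mod_eq {M n m : ℕ} (hm : m ≤ n) (hM : 0 < M) :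
    (n - m) % M + m % M = n % M + M * (if n % M < m % M then 1 else 0) := by
  have hx : m % M < M := Nat.mod_lt _ hM
  have hy : (n - m) % M < M := Nat.mod_lt _ hM
  have h1 : (m % M + (n - m) % M) % M = n % M := by
    rw [← Nat.add_mod, Nat.add_sub_cancel' hm]
  by_cases hc : m % M + (n - m) % M < M
  · rw [Nat.mod_eq_of_lt hc] at h1
    rw [if_neg (by omega)]
    omega
  · push_neg at hc
    rw [Nat.mod_eq_sub_mod hc, Nat.mod_eq_of_lt (by omega)] at h1
    rw [if_pos (by omega)]
    omega

lemma mod_mul_decomp (x k M : ℕ) : x % (k * M) = x % k + k * (x / k % M) := by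
  have e1 : x % (k * M) / k = x / k % M := Nat.mod_mul_right_div_self x k M
  have e2 : x % (k * M) % k = x % k := Nat.mod_mod_of_dvd x ⟨M, rfl⟩
  have e3 := Nat.div_add_mod (x % (k * M)) k
  rw [e1, e2] at e3
  omega

lemma carry_eq_zero_of_lt {q n m i : ℕ} (hm : m ≤ n) (hi : n < q ^ (i + 1)) :
    carlitzCarry q n m i = 0 := by
  unfold carlitzCarry
  rw [Nat.mod_eq_of_lt hi, Nat.mod_eq_of_lt (lt_of_le_of_lt hm hi), if_neg (by omega)]

lemma digit_sum_eq {Q : ℕ} (hQ : 2 ≤ Q) : ∀ (k v : ℕ), v < Q ^ k →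
    ∑ i ∈ range k, v / Q ^ i % Q * Q ^ i = v := by
  intro k
  induction k with
  | zero => intro v hv; simp at hv ⊢; omega
  | succ k ih =>
    intro v hv
    have h1 : ∀ i : ℕ, v / Q ^ (i + 1) % Q * Q ^ (i + 1) = v / Q / Q ^ i % Q * Q ^ i * Q := by
      intro i
      rw [Nat.div_div_eq_div_mul, ← pow_succ']
      ring
    rw [Finset.sum_range_succ']
    simp only [h1]
    rw [← Finset.sum_mul, ih (v / Q) (Nat.div_lt_of_lt_mul (by rw [← pow_succ']; exact hv))]
    simp only [pow_zero, Nat.pow_zero, Nat.div_one, mul_one]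
    exact Nat.div_add_mod' v Q

lemma digit_carry_identity {q : ℕ} (hq : 2 ≤ q) {n m : ℕ} (hm : m ≤ n) (i : ℕ) :
    n / q ^ i % q + q * carlitzCarry q n m i
      = m / q ^ i % q + (n - m) / q ^ i % q
        + (if i = 0 then 0 else carlitzCarry q n m (i - 1)) := by
  obtain ⟨L, rfl⟩ : ∃ L, n = m + L := ⟨n - m, by omega⟩
  rw [Nat.add_sub_cancel_left] at *
  have hq0 : 0 < q := by omega
  have hP : 0 < q ^ i := pow_pos hq0 i
  have hPq : 0 < q ^ (i + 1) := pow_pos hq0 (i + 1)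
  have hc' : (if i = 0 then 0 else carlitzCarry q (m + L) m (i - 1))
      = (if (m + L) % q ^ i < m % q ^ i then 1 else 0) := by
    cases i with
    | zero => simp [Nat.mod_one]
    | succ j => simp [carlitzCarry]
  rw [hc']
  have A := carry_mod_eq (M := q ^ (i + 1)) (Nat.le_add_right m L) hPq
  have B := carry_mod_eq (M := q ^ i) (Nat.le_add_right m L) hP
  rw [Nat.add_sub_cancel_left] at A B
  have key : ∀ x : ℕ, x % q ^ (i + 1) = x % q ^ i + q ^ i * (x / q ^ i % q) := by
    intro x
    rw [pow_succ]
    exact mod_mul_decomp x (q ^ i) q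
  have Kn := key (m + L)
  have Km := key m
  have Kl := key L
  unfold carlitzCarry
  have hcancel : (q : ℤ) ^ i ≠ 0 := pow_ne_zero i (by exact_mod_cast hq0.ne')
  have main : (q : ℤ) ^ i * (((m + L) / q ^ i % q : ℕ)
        + (q : ℕ) * (if (m + L) % q ^ (i + 1) < m % q ^ (i + 1) then (1 : ℕ) else 0))
      = (q : ℤ) ^ i * ((m / q ^ i % q : ℕ) + (L / q ^ i % q : ℕ)
          + (if (m + L) % q ^ i < m % q ^ i then (1 : ℕ) else 0)) := by
    have A' := congrArg (Nat.cast : ℕ → ℤ) A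
    have B' := congrArg (Nat.cast : ℕ → ℤ) B
    have Kn' := congrArg (Nat.cast : ℕ → ℤ) Kn
    have Km' := congrArg (Nat.cast : ℕ → ℤ) Km
    have Kl' := congrArg (Nat.cast : ℕ → ℤ) Kl
    push_cast at A' B' Kn' Km' Kl' ⊢
    linear_combination -A' + B' - Kn' + Km' + Kl'
  have main2 := mul_left_cancel₀ hcancel main
  exact_mod_cast main2

lemma carlitzFactorial_identity {p : ℕ} [CharP Fq p] (hp : p.Prime)
    {s : ℕ} (hs : 0 < s) {n m N : ℕ} (hm : m ≤ n) (hN : n < N) :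
    carlitzFactorial Fq (p ^ s) n
      = carlitzFactorial Fq (p ^ s) m * carlitzFactorial Fq (p ^ s) (n - m) *
        ∏ i ∈ range N, (X ^ (p ^ s) ^ (i + 1) - X) ^ carlitzCarry (p ^ s) n m i := by
  set q : ℕ := p ^ s with hqdef
  have hq : 2 ≤ q := by
    calc 2 = 2 ^ 1 := rfl
    _ ≤ p ^ 1 := Nat.pow_le_pow_left hp.two_le 1
    _ ≤ p ^ s := Nat.pow_le_pow_right (by have := hp.two_le; omega) hs
  apply mul_right_cancel₀
    (b := ∏ i ∈ range N, carlitzD Fq q i ^ (q * carlitzCarry q n m i))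
    (Finset.prod_ne_zero_iff.2 fun i _ => pow_ne_zero _ (carlitzD_ne_zero hq i))
  obtain ⟨N', rfl⟩ : ∃ N', N = N' + 1 := ⟨N - 1, by omega⟩
  have hcN : carlitzCarry q n m N' = 0 :=
    carry_eq_zero_of_lt hm (lt_pow_of_lt hq (by omega))
  have key : ∏ i ∈ range (N' + 1),
        carlitzD Fq q i ^ (if i = 0 then 0 else carlitzCarry q n m (i - 1))
      = (∏ i ∈ range (N' + 1), (X ^ q ^ (i + 1) - X) ^ carlitzCarry q n m i)
        * ∏ i ∈ range (N' + 1), carlitzD Fq q i ^ (q * carlitzCarry q n m i) := by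
    rw [Finset.prod_range_succ']
    simp only [if_pos rfl, pow_zero, mul_one, Nat.add_sub_cancel]
    have step : ∀ i ∈ range N',
        carlitzD Fq q (i + 1) ^ (if i + 1 = 0 then 0 else carlitzCarry q n m i)
        = (X ^ q ^ (i + 1) - X) ^ carlitzCarry q n m i
          * carlitzD Fq q i ^ (q * carlitzCarry q n m i) := by
      intro i _
      rw [if_neg (by omega), hqdef, carlitzD_succ hp, mul_pow, pow_mul]
    rw [Finset.prod_congr rfl step, Finset.prod_mul_distrib]
    rw [Finset.prod_range_succ (fun i => (X ^ q ^ (i + 1) - X) ^ carlitzCarry q n m i),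
      Finset.prod_range_succ (fun i => carlitzD Fq q i ^ (q * carlitzCarry q n m i))]
    rw [hcN]
    simp [mul_assoc, mul_comm, mul_left_comm]
  calc carlitzFactorial Fq q n * ∏ i ∈ range (N' + 1), carlitzD Fq q i ^ (q * carlitzCarry q n m i)
      = ∏ i ∈ range (N' + 1),
          carlitzD Fq q i ^ (n / q ^ i % q + q * carlitzCarry q n m i) := by
        rw [carlitzFactorial_eq_prod hq hN, ← Finset.prod_mul_distrib]
        exact Finset.prod_congr rfl fun i _ => (pow_add _ _ _).symm
    _ = ∏ i ∈ range (N' + 1),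
          carlitzD Fq q i ^ (m / q ^ i % q + (n - m) / q ^ i % q
            + (if i = 0 then 0 else carlitzCarry q n m (i - 1))) := by
        exact Finset.prod_congr rfl fun i _ => by rw [digit_carry_identity hq hm i]
    _ = (∏ i ∈ range (N' + 1), carlitzD Fq q i ^ (m / q ^ i % q))
        * (∏ i ∈ range (N' + 1), carlitzD Fq q i ^ ((n - m) / q ^ i % q))
        * ∏ i ∈ range (N' + 1),
            carlitzD Fq q i ^ (if i = 0 then 0 else carlitzCarry q n m (i - 1)) := by
        rw [← Finset.prod_mul_distrib, ← Finset.prod_mul_distrib]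
        exact Finset.prod_congr rfl fun i _ => by rw [← pow_add, ← pow_add]
    _ = _ := by
        rw [key, ← carlitzFactorial_eq_prod hq (show m < N' + 1 by omega),
          ← carlitzFactorial_eq_prod hq (show n - m < N' + 1 by omega)]
        ring

lemma carlitzBinom_formula {p : ℕ} [CharP Fq p] (hp : p.Prime)
    {s : ℕ} (hs : 0 < s) {n m N : ℕ} (hm : m ≤ n) (hN : n < (p ^ s) ^ N) :
    carlitzBinom Fq (p ^ s) n m
      = ∏ i ∈ range N, (X ^ (p ^ s) ^ (i + 1) - X) ^ carlitzCarry (p ^ s) n m i := by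
  set q : ℕ := p ^ s with hqdef
  have hq : 2 ≤ q := by
    calc 2 = 2 ^ 1 := rfl
    _ ≤ p ^ 1 := Nat.pow_le_pow_left hp.two_le 1
    _ ≤ p ^ s := Nat.pow_le_pow_right (by have := hp.two_le; omega) hs
  have hid := carlitzFactorial_identity (Fq := Fq) hp hs hm (show n < N + n + 1 by omega)
  have hprod : ∏ i ∈ range N, (X ^ q ^ (i + 1) - X) ^ carlitzCarry q n m i
      = ∏ i ∈ range (N + n + 1),
          ((X : Polynomial Fq) ^ q ^ (i + 1) - X) ^ carlitzCarry q n m i := by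
    apply Finset.prod_subset (range_subset_range.2 (by omega))
    intro i hi hni
    have hiN : N ≤ i := by simp at hni hi; omega
    have : carlitzCarry q n m i = 0 :=
      carry_eq_zero_of_lt hm (lt_of_lt_of_le hN (Nat.pow_le_pow_right (by omega) (by omega)))
    rw [this, pow_zero]
  unfold carlitzBinom
  rw [if_pos hm, hid, mul_div_cancel_left₀ _
    (mul_ne_zero (carlitzFactorial_ne_zero_s3 hq m) (carlitzFactorial_ne_zero_s3 hq (n - m))), hprod]

lemma trunc_eq_mod {Q : ℕ} (hQ : 2 ≤ Q) (u k : ℕ) :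
    ∑ i ∈ range k, u / Q ^ i % Q * Q ^ i = u % Q ^ k := by
  rw [← digit_sum_eq hQ k (u % Q ^ k) (Nat.mod_lt _ (pow_pos (by omega) k))]
  refine Finset.sum_congr rfl fun i hi => ?_
  congr 1
  have h1 : u % Q ^ k / Q ^ i = u / Q ^ i % Q ^ (k - i) := by
    rw [← Nat.mod_mul_right_div_self, ← pow_add, Nat.add_sub_cancel' (le_of_lt (mem_range.1 hi))]
  rw [h1, Nat.mod_mod_of_dvd _ (dvd_pow_self Q (by have := mem_range.1 hi; omega))]

lemma carry_append_low {q A B u T : ℕ} (i : ℕ) (hdvd : q ^ (i + 1) ∣ T) :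
    carlitzCarry q (A + T * B) u i = carlitzCarry q A (u % T) i := by
  unfold carlitzCarry
  obtain ⟨t, ht⟩ := hdvd
  have h1 : (A + T * B) % q ^ (i + 1) = A % q ^ (i + 1) := by
    rw [ht, mul_assoc]
    exact Nat.add_mul_mod_self_left A _ _
  have h2 : u % T % q ^ (i + 1) = u % q ^ (i + 1) := Nat.mod_mod_of_dvd u ⟨t, ht⟩
  rw [h1, h2]

lemma carry_append_high {A B u T : ℕ} (hA : A < T) (hu1 : u % T ≤ A) {M : ℕ} (hM : 0 < M) :
    ((A + T * B) % (T * M) < u % (T * M)) ↔ (B % M < u / T % M) := by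
  have hT : 0 < T := by omega
  have h1 : (A + T * B) % (T * M) = A + T * (B % M) := by
    rw [mod_mul_decomp]
    congr 1
    · rw [Nat.add_mul_mod_self_left, Nat.mod_eq_of_lt hA]
    · congr 2
      rw [Nat.add_mul_div_left _ _ hT, Nat.div_eq_of_lt hA, Nat.zero_add]
  have h2 : u % (T * M) = u % T + T * (u / T % M) := mod_mul_decomp u T M
  rw [h1, h2]
  have hBM : B % M < M := Nat.mod_lt _ hM
  have hwM : u / T % M < M := Nat.mod_lt _ hM
  have huT : u % T < T := Nat.mod_lt _ hT
  constructor
  · intro hlt; by_contra hc; push_neg at hc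
    have := Nat.mul_le_mul_left T hc
    omega
  · intro hlt
    have h3 : B % M + 1 ≤ u / T % M := hlt
    have h5 := Nat.mul_le_mul_left T h3
    have h4 : T * (B % M + 1) = T * (B % M) + T := by ring
    omega

lemma root_pow_pow {Fq' : Type*} [Field Fq'] [Fintype Fq'] {℘ : Polynomial Fq'}
    (hirr : Irreducible ℘) (k : ℕ) :
    (AdjoinRoot.root ℘) ^ (Fintype.card Fq') ^ (℘.natDegree * k) = AdjoinRoot.root ℘ := by
  haveI : Fact (Irreducible ℘) := ⟨hirr⟩
  have hne : ℘ ≠ 0 := hirr.ne_zero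
  haveI : Fintype (AdjoinRoot ℘) := Module.fintypeOfFintype (AdjoinRoot.powerBasis hne).basis
  have hcard : Fintype.card (AdjoinRoot ℘) = Fintype.card Fq' ^ ℘.natDegree := by
    rw [Module.card_fintype (AdjoinRoot.powerBasis hne).basis, Fintype.card_fin]
    rfl
  have base : ∀ x : AdjoinRoot ℘, x ^ (Fintype.card Fq' ^ ℘.natDegree) = x := by
    intro x; rw [← hcard]; exact FiniteField.pow_card x
  induction k with
  | zero => simp
  | succ k ih =>
    rw [Nat.mul_succ, pow_add, pow_mul, ih, base]

lemma mk_bracket_shift {Fq' : Type*} [Field Fq'] [Fintype Fq'] {℘ : Polynomial Fq'}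
    (hirr : Irreducible ℘) (j k : ℕ) :
    AdjoinRoot.mk ℘ (X ^ (Fintype.card Fq') ^ (℘.natDegree * k + j) - X)
      = AdjoinRoot.mk ℘ (X ^ (Fintype.card Fq') ^ j - X) := by
  rw [map_sub, map_sub, map_pow, map_pow, AdjoinRoot.mk_X]
  congr 1
  rw [pow_add, pow_mul, root_pow_pow hirr]

end helpers

/-- Lemma 2: for a prime `℘` of degree `h ≥ 1` in `A`, words `ᾱ, β̄ ∈ S_h^ω` (nonempty
lists of digits `< q^h`, with `z_ᾱ(h) = Nat.ofDigits (q^h) ᾱ` and `deg ᾱ = ᾱ.length`,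
concatenation being list append) and `u ∈ ℤ_{≥0}`,
`binom(z_{ᾱ⋆β̄}(h), u)_C ≡ binom(z_ᾱ(h), u_{(deg ᾱ − 1, 0)})_C · binom(z_β̄(h), u_{(deg ᾱ)})_C
(mod ℘)`. -/
theorem carlitzBinom_concat_congr (Fq : Type*) [Field Fq] [Fintype Fq]
    (p s : ℕ) (hp : p.Prime) (hs : 0 < s) (hcard : Fintype.card Fq = p ^ s)
    (h : ℕ) (hh : 1 ≤ h) (℘ : Polynomial Fq) (hirr : Irreducible ℘) (hdeg : ℘.natDegree = h)
    (a b : List ℕ) (ha : a ≠ []) (ha' : ∀ x ∈ a, x < (p ^ s) ^ h)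
    (hb : b ≠ []) (hb' : ∀ x ∈ b, x < (p ^ s) ^ h) (u : ℕ) :
    ℘ ∣ (carlitzBinom Fq (p ^ s) (Nat.ofDigits ((p ^ s) ^ h) (a ++ b)) u -
      carlitzBinom Fq (p ^ s) (Nat.ofDigits ((p ^ s) ^ h) a)
          (digitTrunc ((p ^ s) ^ h) u (a.length - 1) 0) *
        carlitzBinom Fq (p ^ s) (Nat.ofDigits ((p ^ s) ^ h) b)
          (digitShift ((p ^ s) ^ h) u a.length)) := by
  have hp2 := hp.two_le
  have hq2 : 2 ≤ p ^ s := by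
    calc 2 = 2 ^ 1 := rfl
    _ ≤ p ^ 1 := Nat.pow_le_pow_left hp2 1
    _ ≤ p ^ s := Nat.pow_le_pow_right (by omega) hs
  haveI hchar : CharP Fq p := by
    haveI := ringChar.charP Fq
    obtain ⟨n, hcp, hc⟩ := FiniteField.card Fq (ringChar Fq)
    have hdvd : p ∣ ringChar Fq ^ (n : ℕ) := by
      rw [← hc, hcard]; exact dvd_pow_self p (by omega)
    have hpe : p = ringChar Fq := (Nat.prime_dvd_prime_iff_eq hp hcp).mp (hp.dvd_of_dvd_pow hdvd)
    rw [hpe]; exact ringChar.charP Fq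
  have hQ2 : 2 ≤ (p ^ s) ^ h := by
    calc 2 ≤ p ^ s := hq2
    _ = (p ^ s) ^ 1 := (pow_one _).symm
    _ ≤ (p ^ s) ^ h := Nat.pow_le_pow_right (by omega) hh
  have hr1 : 1 ≤ a.length := List.length_pos_iff.2 ha
  have hQpow : ∀ k : ℕ, ((p ^ s) ^ h) ^ k = (p ^ s) ^ (k * h) := fun k => by
    rw [← pow_mul, mul_comm]
  have hA : Nat.ofDigits ((p ^ s) ^ h) a < ((p ^ s) ^ h) ^ a.length :=
    Nat.ofDigits_lt_base_pow_length (by omega) ha'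
  have hB : Nat.ofDigits ((p ^ s) ^ h) b < ((p ^ s) ^ h) ^ b.length :=
    Nat.ofDigits_lt_base_pow_length (by omega) hb'
  have hz : Nat.ofDigits ((p ^ s) ^ h) (a ++ b)
      = Nat.ofDigits ((p ^ s) ^ h) a
        + ((p ^ s) ^ h) ^ a.length * Nat.ofDigits ((p ^ s) ^ h) b := Nat.ofDigits_append
  set A : ℕ := Nat.ofDigits ((p ^ s) ^ h) a with hAdef
  set B : ℕ := Nat.ofDigits ((p ^ s) ^ h) b with hBdef
  have hTpos : 0 < ((p ^ s) ^ h) ^ a.length := pow_pos (by omega) _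
  have hu1A : u % ((p ^ s) ^ h) ^ a.length < ((p ^ s) ^ h) ^ a.length := Nat.mod_lt _ hTpos
  have hu : u % ((p ^ s) ^ h) ^ a.length
      + ((p ^ s) ^ h) ^ a.length * (u / ((p ^ s) ^ h) ^ a.length) = u := Nat.mod_add_div u _
  have hdt : digitTrunc ((p ^ s) ^ h) u (a.length - 1) 0 = u % ((p ^ s) ^ h) ^ a.length := by
    unfold digitTrunc
    rw [show a.length - 1 + 1 = a.length from by omega, ← trunc_eq_mod hQ2 u a.length]
    exact Finset.sum_congr rfl fun i _ => by rw [Nat.zero_add]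
  have hds : digitShift ((p ^ s) ^ h) u a.length = u / ((p ^ s) ^ h) ^ a.length := by
    unfold digitShift
    have hstep : ∀ i ∈ range (u + 1),
        u / ((p ^ s) ^ h) ^ (a.length + i) % ((p ^ s) ^ h) * ((p ^ s) ^ h) ^ i
        = u / ((p ^ s) ^ h) ^ a.length / ((p ^ s) ^ h) ^ i % ((p ^ s) ^ h) * ((p ^ s) ^ h) ^ i := by
      intro i _; rw [pow_add, ← Nat.div_div_eq_div_mul]
    rw [Finset.sum_congr rfl hstep]
    exact digit_sum_eq hQ2 (u + 1) _
      (lt_of_le_of_lt (Nat.div_le_self u _) (lt_pow_of_lt hQ2 (by omega)))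
  rw [hz, hdt, hds]
  rw [← AdjoinRoot.mk_eq_zero, map_sub, map_mul, sub_eq_zero]
  set T : ℕ := ((p ^ s) ^ h) ^ a.length with hTdef
  by_cases hle : u ≤ A + T * B
  · have hz2 : A + T * B < (p ^ s) ^ (a.length * h + b.length * h) := by
      have e1 : (p ^ s) ^ (a.length * h + b.length * h) = T * ((p ^ s) ^ h) ^ b.length := by
        rw [hTdef, hQpow a.length, hQpow b.length, ← pow_add]
      have h5 := Nat.mul_le_mul_left T (show B + 1 ≤ ((p ^ s) ^ h) ^ b.length from hB)
      have h4 : T * (B + 1) = T * B + T := by ring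
      omega
    by_cases hA1 : u % T ≤ A
    · have hu2B : u / T ≤ B := by
        by_contra hc; push_neg at hc
        have h5 := Nat.mul_le_mul_left T (show B + 1 ≤ u / T from hc)
        have h4 : T * (B + 1) = T * B + T := by ring
        omega
      rw [carlitzBinom_formula hp hs hle hz2]
      rw [carlitzBinom_formula hp hs hA1
        (show A < (p ^ s) ^ (a.length * h) from by rw [← hQpow a.length, ← hTdef]; exact hA)]
      rw [carlitzBinom_formula hp hs hu2B
        (show B < (p ^ s) ^ (b.length * h) from by rw [← hQpow b.length]; exact hB)]
      rw [Finset.prod_range_add, map_mul]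
      congr 1
      · congr 1
        refine Finset.prod_congr rfl fun i hi => ?_
        rw [carry_append_low i
          (by rw [hTdef, hQpow a.length]
              exact pow_dvd_pow (p ^ s) (by have := mem_range.1 hi; omega))]
      · rw [map_prod, map_prod]
        refine Finset.prod_congr rfl fun j _ => ?_
        have hcm : carlitzCarry (p ^ s) (A + T * B) u (a.length * h + j)
            = carlitzCarry (p ^ s) B (u / T) j := by
          unfold carlitzCarry
          have hTM : (p ^ s) ^ (a.length * h + j + 1) = T * (p ^ s) ^ (j + 1) := by
            rw [hTdef, hQpow a.length, ← pow_add]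
            exact congrArg ((p ^ s) ^ ·) (by omega)
          rw [hTM, if_congr (carry_append_high hA hA1 (pow_pos (by omega) (j + 1))) rfl rfl]
        rw [hcm, map_pow, map_pow]
        congr 1
        have hmk := mk_bracket_shift hirr (j + 1) a.length
        rw [hcard, hdeg] at hmk
        rw [show a.length * h + j + 1 = h * a.length + (j + 1) from by ring]
        exact hmk
    · push_neg at hA1
      rw [carlitzBinom_formula hp hs hle hz2, map_prod]
      have hrh1 : 0 < a.length * h := Nat.mul_pos (by omega) (by omega)
      have hmem : a.length * h - 1 ∈ range (a.length * h + b.length * h) := mem_range.2 (by omega)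
      rw [Finset.prod_eq_zero hmem]
      · symm
        unfold carlitzBinom
        rw [if_neg (by omega), map_zero, zero_mul]
      · have hc1 : carlitzCarry (p ^ s) (A + T * B) u (a.length * h - 1) = 1 := by
          unfold carlitzCarry
          rw [show a.length * h - 1 + 1 = a.length * h from by omega]
          rw [← hQpow a.length, ← hTdef]
          rw [Nat.add_mul_mod_self_left, Nat.mod_eq_of_lt hA]
          rw [if_pos hA1]
        rw [hc1, map_pow, pow_one]
        have hmk := mk_bracket_shift hirr 0 a.length
        rw [hcard, hdeg] at hmk
        rw [show h * a.length + 0 = a.length * h from by ring] at hmk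
        rw [show a.length * h - 1 + 1 = a.length * h from by omega]
        rw [hmk]
        simp
  · push_neg at hle
    rw [show carlitzBinom Fq (p ^ s) (A + T * B) u = 0 from by
      unfold carlitzBinom; rw [if_neg (by omega)]]
    rw [map_zero]
    by_cases hA1 : u % T ≤ A
    · have hu2B : ¬ (u / T ≤ B) := by
        intro hc
        have h5 := Nat.mul_le_mul_left T hc
        omega
      rw [show carlitzBinom Fq (p ^ s) B (u / T) = 0 from by
        unfold carlitzBinom; rw [if_neg hu2B]]
      rw [map_zero, mul_zero]
    · rw [show carlitzBinom Fq (p ^ s) A (u % T) = 0 from by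
        unfold carlitzBinom; rw [if_neg hA1]]
      rw [map_zero, zero_mul]
end

section
/- Let ℘ be a prime of degree h ≥ 1 in A and 𝔮 a primitive root modulo ℘. For all ᾱ, β̄ ∈ S_h^ω, one has the congruence of integer polynomials Σ_{m=0}^{q^h−2} ε_m(z_{ᾱ⋆β̄}(h)) x^m ≡ (Σ_{m=0}^{q^h−2} ε_m(z_ᾱ(h)) x^m) · (Σ_{m=0}^{q^h−2} ε_m(z_β̄(h)) x^m) (mod (x^{q^h−1} − 1)) in ℤ[x]; i.e., the map ᾱ ↦ Σ_{m=0}^{q^h−2} ε_m(z_ᾱ(h)) x^m is a semigroup homomorphism from (S_h^ω, ⋆) to the multiplicative semigroup ℤ[x]/(x^{q^h−1} − 1). -/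
open Polynomial

/-- `ε_j(n)`: the number of integers `0 ≤ m ≤ n` with `binom(n,m)_C ≡ 𝔮^j (mod ℘)`,
where `𝔮` is (the class of) a primitive root modulo `℘`, viewed as a unit of `A/℘A`. -/
noncomputable def carlitzEps (Fq : Type*) [Field Fq] (q : ℕ) (℘ : Polynomial Fq)
    (𝔮 : (Polynomial Fq ⧸ Ideal.span {℘})ˣ) (j : ℤ) (n : ℕ) : ℕ :=
  Set.ncard {m : ℕ | m ≤ n ∧
    Ideal.Quotient.mk (Ideal.span {℘}) (carlitzBinom Fq q n m) = ↑(𝔮 ^ j)}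

namespace CEpsAux

/-! ### Carries in base-`q` addition -/

/-- The carry at place `i` when adding `m` and `k` in base `q`. -/
def crr (q m k i : ℕ) : ℕ := (m % q ^ i + k % q ^ i) / q ^ i

theorem crr_zero (q m k : ℕ) : crr q m k 0 = 0 := by simp [crr, Nat.mod_one]

theorem crr_eq_zero {q m k i : ℕ} (h : m + k < q ^ i) : crr q m k i = 0 := by
  apply Nat.div_eq_of_lt
  calc m % q ^ i + k % q ^ i ≤ m + k := Nat.add_le_add (Nat.mod_le _ _) (Nat.mod_le _ _)
    _ < q ^ i := h

theorem div_add_div {q : ℕ} (hq : 2 ≤ q) (m k i : ℕ) :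
    (m + k) / q ^ i = m / q ^ i + k / q ^ i + crr q m k i := by
  have hqi : 0 < q ^ i := Nat.pow_pos (by omega)
  conv_lhs => rw [show m + k = q ^ i * (m / q ^ i + k / q ^ i) + (m % q ^ i + k % q ^ i) by
    rw [Nat.mul_add]
    have := Nat.div_add_mod m (q ^ i); have := Nat.div_add_mod k (q ^ i); omega]
  rw [Nat.mul_add_div hqi]
  rfl

theorem digit_identity {q : ℕ} (hq : 2 ≤ q) (m k i : ℕ) :
    (m + k) / q ^ i % q + q * crr q m k (i + 1) =
      m / q ^ i % q + k / q ^ i % q + crr q m k i := by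
  have hqi : 0 < q ^ i := Nat.pow_pos (by omega)
  set M := m / q ^ i with hM
  set K := k / q ^ i with hK
  set c := crr q m k i with hc
  set c' := crr q m k (i + 1) with hc'
  have hW : (m + k) / q ^ i = M + K + c := div_add_div hq m k i
  have hW' : (m + k) / q ^ (i + 1) = m / q ^ (i + 1) + k / q ^ (i + 1) + c' :=
    div_add_div hq m k (i + 1)
  have hdd : ∀ n : ℕ, n / q ^ (i + 1) = n / q ^ i / q := by
    intro n; rw [pow_succ, Nat.div_div_eq_div_mul]
  rw [hdd, hdd, hdd] at hW'
  rw [hW] at hW'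
  have h1 := Nat.div_add_mod M q
  have h2 := Nat.div_add_mod K q
  have h3 := Nat.div_add_mod (M + K + c) q
  have h4 : q * ((M + K + c) / q) = q * (M / q) + q * (K / q) + q * c' := by
    rw [hW']; ring
  rw [hW]
  omega

theorem mod_pow_split {q : ℕ} (hq : 2 ≤ q) {m1 : ℕ} (t j : ℕ) (m2 : ℕ) (h1 : m1 < q ^ t) :
    (m1 + q ^ t * m2) % q ^ (t + j) = m1 + q ^ t * (m2 % q ^ j) := by
  have hqt : 0 < q ^ t := Nat.pow_pos (by omega)
  have hqj : 0 < q ^ j := Nat.pow_pos (by omega)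
  have key : m1 + q ^ t * m2 = q ^ (t + j) * (m2 / q ^ j) + (m1 + q ^ t * (m2 % q ^ j)) := by
    rw [pow_add]
    nlinarith [Nat.div_add_mod m2 (q ^ j)]
  rw [key, Nat.mul_add_mod]
  apply Nat.mod_eq_of_lt
  rw [pow_add]
  have h2 : m2 % q ^ j + 1 ≤ q ^ j := Nat.mod_lt m2 hqj
  have h3 : q ^ t * (m2 % q ^ j + 1) ≤ q ^ t * q ^ j := Nat.mul_le_mul_left _ h2
  rw [Nat.mul_add, Nat.mul_one] at h3
  omega

theorem crr_low {q : ℕ} {i t : ℕ} (hit : i ≤ t) (m1 k1 m2 k2 : ℕ) :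
    crr q (m1 + q ^ t * m2) (k1 + q ^ t * k2) i = crr q m1 k1 i := by
  have hd : q ^ i ∣ q ^ t := pow_dvd_pow q hit
  have e : ∀ a c : ℕ, (a + q ^ t * c) % q ^ i = a % q ^ i := by
    intro a c
    obtain ⟨d, hd⟩ := hd
    rw [hd, mul_assoc, Nat.add_mul_mod_self_left]
  unfold crr
  rw [e, e]

theorem crr_high {q : ℕ} (hq : 2 ≤ q) {m1 k1 : ℕ} (t j : ℕ) (m2 k2 : ℕ)
    (hm1 : m1 < q ^ t) (hk1 : k1 < q ^ t) (hsum : m1 + k1 < q ^ t) :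
    crr q (m1 + q ^ t * m2) (k1 + q ^ t * k2) (t + j) = crr q m2 k2 j := by
  have hqt : 0 < q ^ t := Nat.pow_pos (by omega)
  unfold crr
  rw [mod_pow_split hq t j m2 hm1, mod_pow_split hq t j k2 hk1]
  rw [show m1 + q ^ t * (m2 % q ^ j) + (k1 + q ^ t * (k2 % q ^ j)) =
    (m1 + k1) + q ^ t * (m2 % q ^ j + k2 % q ^ j) by ring]
  rw [pow_add, ← Nat.div_div_eq_div_mul, Nat.add_mul_div_left _ _ hqt,
    Nat.div_eq_of_lt hsum, Nat.zero_add]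

theorem crr_boundary {q : ℕ} (hq : 2 ≤ q) {m1 k1 : ℕ} (t : ℕ) (m2 k2 : ℕ)
    (hm1 : m1 < q ^ t) (hk1 : k1 < q ^ t) (hsum : q ^ t ≤ m1 + k1) :
    crr q (m1 + q ^ t * m2) (k1 + q ^ t * k2) t = 1 := by
  have h := mod_pow_split hq t 0 m2 hm1
  have h' := mod_pow_split hq t 0 k2 hk1
  simp only [Nat.add_zero, pow_zero, Nat.mod_one, Nat.mul_zero] at h h'
  unfold crr
  rw [h, h']
  rw [Nat.div_eq_of_lt_le (k := 1) (by omega) (by omega)]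

/-! ### Product formulas for the Carlitz factorial and binomial coefficients -/

variable {Fq : Type*} [Field Fq]

theorem carlitzD_succ {p s : ℕ} (hp : p.Prime) [CharP Fq p] (q : ℕ) (hq : q = p ^ s) (i : ℕ) :
    carlitzD Fq q (i + 1) = (X ^ q ^ (i + 1) - X) * carlitzD Fq q i ^ q := by
  haveI : Fact p.Prime := ⟨hp⟩
  unfold carlitzD
  rw [Finset.prod_range_succ']
  have h1 : (X : Polynomial Fq) ^ q ^ (0 : ℕ) = X := by rw [pow_zero, pow_one]
  rw [h1, mul_comm]
  congr 1
  rw [← Finset.prod_pow]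
  apply Finset.prod_congr rfl
  intro r _
  subst hq
  rw [sub_pow_char_pow]
  congr 1 <;> simp only [← pow_mul, ← pow_add, Nat.mul_succ]

theorem X_pow_sub_X_pow_ne_zero {a b : ℕ} (h : a ≠ b) :
    (X : Polynomial Fq) ^ a - X ^ b ≠ 0 := by
  intro hc
  rw [sub_eq_zero] at hc
  have := congrArg natDegree hc
  rw [natDegree_X_pow, natDegree_X_pow] at this
  exact h this

theorem carlitzD_ne_zero {q : ℕ} (hq : 2 ≤ q) (i : ℕ) : carlitzD Fq q i ≠ 0 := by
  unfold carlitzD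
  rw [Finset.prod_ne_zero_iff]
  intro r hr
  rw [Finset.mem_range] at hr
  exact X_pow_sub_X_pow_ne_zero (Nat.ne_of_gt (Nat.pow_lt_pow_right (by omega) hr))

theorem factorial_eq_prod {q : ℕ} (hq : 2 ≤ q) {n R : ℕ} (hR : n < q ^ R) :
    carlitzFactorial Fq q n = ∏ i ∈ Finset.range R, carlitzD Fq q i ^ (n / q ^ i % q) := by
  have key : ∀ R S : ℕ, R ≤ S → n < q ^ R →
      (∏ i ∈ Finset.range S, carlitzD Fq q i ^ (n / q ^ i % q)) =
        ∏ i ∈ Finset.range R, carlitzD Fq q i ^ (n / q ^ i % q) := by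
    intro R S hRS hnR
    symm
    apply Finset.prod_subset (Finset.range_subset_range.mpr hRS)
    intro i _ hi
    rw [Finset.mem_range] at hi
    push_neg at hi
    have : n < q ^ i := lt_of_lt_of_le hnR (Nat.pow_le_pow_right (by omega) hi)
    rw [Nat.div_eq_of_lt this]
    simp
  have hn1 : n < q ^ (n + 1) := by
    calc n < 2 ^ (n + 1) := by
          have := Nat.lt_two_pow_self (n := n); omega
      _ ≤ q ^ (n + 1) := Nat.pow_le_pow_left hq _
  rcases le_total R (n + 1) with hc | hc
  · rw [carlitzFactorial, key R (n + 1) hc hR]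
  · rw [carlitzFactorial, ← key (n + 1) R hc hn1]

theorem factorial_ne_zero {q : ℕ} (hq : 2 ≤ q) (n : ℕ) : carlitzFactorial Fq q n ≠ 0 := by
  unfold carlitzFactorial
  rw [Finset.prod_ne_zero_iff]
  exact fun i _ => pow_ne_zero _ (carlitzD_ne_zero hq i)

theorem factorial_mul {p s : ℕ} (hp : p.Prime) [CharP Fq p] {q : ℕ} (hq : q = p ^ s)
    (hq2 : 2 ≤ q) {m k R : ℕ} (hR : m + k < q ^ R) :
    carlitzFactorial Fq q (m + k) =
      carlitzFactorial Fq q m * carlitzFactorial Fq q k *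
        ∏ i ∈ Finset.range R, (X ^ q ^ (i + 1) - X) ^ crr q m k (i + 1) := by
  have hqR : q ^ R ≤ q ^ (R + 1) := Nat.pow_le_pow_right (by omega) (by omega)
  have hmR : m < q ^ (R + 1) := by omega
  have hkR : k < q ^ (R + 1) := by omega
  have hnR : m + k < q ^ (R + 1) := by omega
  set D := fun i => carlitzD Fq q i with hD
  set c := fun i => crr q m k i with hc
  set W : Polynomial Fq := ∏ i ∈ Finset.range R, (D i ^ q) ^ c (i + 1) with hW
  have hWne : W ≠ 0 := by
    rw [hW, Finset.prod_ne_zero_iff]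
    exact fun i _ => pow_ne_zero _ (pow_ne_zero _ (carlitzD_ne_zero hq2 i))
  have main : carlitzFactorial Fq q m * carlitzFactorial Fq q k *
      (∏ i ∈ Finset.range R, (X ^ q ^ (i + 1) - X) ^ c (i + 1)) * W =
      carlitzFactorial Fq q (m + k) * W := by
    calc carlitzFactorial Fq q m * carlitzFactorial Fq q k *
        (∏ i ∈ Finset.range R, (X ^ q ^ (i + 1) - X) ^ c (i + 1)) * W
        = carlitzFactorial Fq q m * carlitzFactorial Fq q k *
          ∏ i ∈ Finset.range R, ((X ^ q ^ (i + 1) - X) * D i ^ q) ^ c (i + 1) := by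
          rw [mul_assoc]
          congr 1
          rw [hW, ← Finset.prod_mul_distrib]
          apply Finset.prod_congr rfl
          intro i _
          rw [mul_pow]
      _ = carlitzFactorial Fq q m * carlitzFactorial Fq q k *
          ∏ i ∈ Finset.range R, D (i + 1) ^ c (i + 1) := by
          congr 1
          apply Finset.prod_congr rfl
          intro i _
          rw [hD, ← carlitzD_succ hp q hq]
      _ = carlitzFactorial Fq q m * carlitzFactorial Fq q k *
          ∏ i ∈ Finset.range (R + 1), D i ^ c i := by
          congr 1
          rw [Finset.prod_range_succ']
          simp [hc, crr_zero]
      _ = ∏ i ∈ Finset.range (R + 1), D i ^ (m / q ^ i % q + k / q ^ i % q + c i) := by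
          rw [factorial_eq_prod hq2 hmR, factorial_eq_prod hq2 hkR,
            ← Finset.prod_mul_distrib, ← Finset.prod_mul_distrib]
          apply Finset.prod_congr rfl
          intro i _
          rw [pow_add, pow_add]
      _ = ∏ i ∈ Finset.range (R + 1), D i ^ ((m + k) / q ^ i % q + q * c (i + 1)) := by
          apply Finset.prod_congr rfl
          intro i _
          rw [digit_identity hq2 m k i]
      _ = carlitzFactorial Fq q (m + k) * W := by
          have hcR : c (R + 1) = 0 := by
            rw [hc]
            apply crr_eq_zero
            omega
          have hWext : W = ∏ i ∈ Finset.range (R + 1), (D i ^ q) ^ c (i + 1) := by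
            rw [hW, Finset.prod_range_succ, hcR]
            simp
          rw [factorial_eq_prod hq2 hnR, hWext, ← Finset.prod_mul_distrib]
          apply Finset.prod_congr rfl
          intro i _
          rw [pow_add, ← pow_mul, mul_comm q (c (i + 1))]
  have := mul_right_cancel₀ hWne main
  rw [← this]

theorem binom_eq {p s : ℕ} (hp : p.Prime) [CharP Fq p] {q : ℕ} (hq : q = p ^ s)
    (hq2 : 2 ≤ q) {n m R : ℕ} (hmn : m ≤ n) (hR : n < q ^ R) :
    carlitzBinom Fq q n m =
      ∏ i ∈ Finset.range R, (X ^ q ^ (i + 1) - X) ^ crr q m (n - m) (i + 1) := by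
  rw [carlitzBinom, if_pos hmn]
  have hnm : m + (n - m) = n := by omega
  have hfac := factorial_mul (Fq := Fq) hp hq hq2 (R := R) (m := m) (k := n - m) (by omega)
  rw [hnm] at hfac
  rw [hfac]
  exact mul_div_cancel_left₀ _
    (mul_ne_zero (factorial_ne_zero hq2 _) (factorial_ne_zero hq2 _))

/-! ### The quotient field -/

theorem quotient_facts [Fintype Fq] (℘ : Polynomial Fq) (hirr : Irreducible ℘)
    (𝔮 : (Polynomial Fq ⧸ Ideal.span {℘})ˣ) (hgen : ∀ x, x ∈ Subgroup.zpowers 𝔮) :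
    (Ideal.Quotient.mk (Ideal.span {℘}) X) ^ (Fintype.card Fq) ^ ℘.natDegree =
        Ideal.Quotient.mk (Ideal.span {℘}) X ∧
      orderOf 𝔮 = (Fintype.card Fq) ^ ℘.natDegree - 1 ∧
      (∀ ζ : Polynomial Fq ⧸ Ideal.span {℘}, ζ ≠ 0 → ∃ u : (Polynomial Fq ⧸ Ideal.span {℘})ˣ,
        (u : Polynomial Fq ⧸ Ideal.span {℘}) = ζ) := by
  haveI : Fact (Irreducible ℘) := ⟨hirr⟩
  haveI := PrincipalIdealRing.isMaximal_of_irreducible hirr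
  letI : Field (Polynomial Fq ⧸ Ideal.span {℘}) := Ideal.Quotient.field _
  haveI := Classical.decEq (Polynomial Fq ⧸ Ideal.span {℘})
  let b : Module.Basis (Fin ℘.natDegree) Fq (Polynomial Fq ⧸ Ideal.span {℘}) :=
    AdjoinRoot.powerBasisAux hirr.ne_zero
  letI : Fintype (Polynomial Fq ⧸ Ideal.span {℘}) := Module.fintypeOfFintype b
  have hcard : Fintype.card (Polynomial Fq ⧸ Ideal.span {℘}) =
      Fintype.card Fq ^ ℘.natDegree := by
    rw [Module.card_fintype b, Fintype.card_fin]
  refine ⟨?_, ?_, ?_⟩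
  · rw [← hcard]
    exact FiniteField.pow_card _
  · rw [orderOf_eq_card_of_forall_mem_zpowers hgen, Nat.card_units,
      Nat.card_eq_fintype_card, hcard]
  · intro ζ hζ
    exact ⟨Units.mk0 ζ hζ, rfl⟩

/-! ### A double-counting reindexation -/

theorem sum_range_mul_eq {M : Type*} [AddCommMonoid M] (f : ℕ → M) (A b : ℕ) :
    ∑ m ∈ Finset.range (A * b), f m =
      ∑ j ∈ Finset.range b, ∑ i ∈ Finset.range A, f (i + A * j) := by
  induction b with
  | zero => simp
  | succ b ih =>
    rw [Nat.mul_succ, Finset.sum_range_add, ih, Finset.sum_range_succ]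
    congr 1
    apply Finset.sum_congr rfl
    intro i _
    rw [Nat.add_comm (A * b) i]

end CEpsAux

set_option maxHeartbeats 1000000 in
/-- The map `Γ : ᾱ ↦ Σ_{m=0}^{q^h−2} ε_m(z_ᾱ(h)) x^m` is a semigroup homomorphism from
`(S_h^ω, ⋆)` (words = nonempty lists of digits `< q^h`, `z_ᾱ(h) = Nat.ofDigits (q^h) ᾱ`,
`⋆` = list append) to the multiplicative semigroup `ℤ[x]/(x^{q^h−1} − 1)`:
`Γ(ᾱ⋆β̄) ≡ Γ(ᾱ)·Γ(β̄) (mod (x^{q^h−1} − 1))` in `ℤ[x]`. -/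
theorem carlitzEps_poly_concat_congr (Fq : Type*) [Field Fq] [Fintype Fq]
    (p s : ℕ) (hp : p.Prime) (hs : 0 < s) (hcard : Fintype.card Fq = p ^ s)
    (h : ℕ) (hh : 1 ≤ h) (℘ : Polynomial Fq) (hirr : Irreducible ℘) (hdeg : ℘.natDegree = h)
    (𝔮 : (Polynomial Fq ⧸ Ideal.span {℘})ˣ) (hgen : ∀ x, x ∈ Subgroup.zpowers 𝔮)
    (a b : List ℕ) (ha : a ≠ []) (ha' : ∀ x ∈ a, x < (p ^ s) ^ h)
    (hb : b ≠ []) (hb' : ∀ x ∈ b, x < (p ^ s) ^ h) :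
    ((X : Polynomial ℤ) ^ ((p ^ s) ^ h - 1) - 1) ∣
      ((∑ m ∈ Finset.range ((p ^ s) ^ h - 1),
          (Polynomial.C
            (carlitzEps Fq (p ^ s) ℘ 𝔮 (m : ℤ) (Nat.ofDigits ((p ^ s) ^ h) (a ++ b)) : ℤ)) *
            X ^ m) -
        (∑ m ∈ Finset.range ((p ^ s) ^ h - 1),
          (Polynomial.C
            (carlitzEps Fq (p ^ s) ℘ 𝔮 (m : ℤ) (Nat.ofDigits ((p ^ s) ^ h) a) : ℤ)) *
            X ^ m) *
        (∑ m ∈ Finset.range ((p ^ s) ^ h - 1),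
          (Polynomial.C
            (carlitzEps Fq (p ^ s) ℘ 𝔮 (m : ℤ) (Nat.ofDigits ((p ^ s) ^ h) b) : ℤ)) *
            X ^ m)) := by
  classical
  open CEpsAux in
  have hp2 := hp.two_le
  have hq2 : 2 ≤ p ^ s := le_trans hp2 (Nat.le_self_pow (by omega) p)
  haveI hchar : CharP Fq p := by
    haveI := ringChar.charP Fq
    have hprime : (ringChar Fq).Prime := CharP.char_is_prime Fq (ringChar Fq)
    obtain ⟨n, hn, hcard'⟩ := FiniteField.card Fq (ringChar Fq)
    have heq : p ^ s = (ringChar Fq) ^ (n : ℕ) := by rw [← hcard, ← hcard']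
    have hdvd : p ∣ ringChar Fq := by
      apply hp.dvd_of_dvd_pow (n := (n : ℕ))
      rw [← heq]
      exact dvd_pow_self p (by omega)
    have : p = ringChar Fq := (Nat.prime_dvd_prime_iff_eq hp hprime).mp hdvd
    rw [this]
    exact ringChar.charP Fq
  set q : ℕ := p ^ s with hqdef
  set B : ℕ := q ^ h with hBdef
  set N : ℕ := B - 1 with hNdef
  have hB2 : 2 ≤ B := le_trans hq2 (Nat.le_self_pow (by omega) q)
  have hNpos : 0 < N := by omega
  obtain ⟨hxh, horder, hunit⟩ := CEpsAux.quotient_facts ℘ hirr 𝔮 hgen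
  rw [hcard, hdeg] at hxh horder
  rw [← hBdef, ← hNdef] at horder
  set φ := Ideal.Quotient.mk (Ideal.span {℘}) with hφ
  have hxt : ∀ u : ℕ, φ X ^ q ^ (h * u) = φ X := by
    intro u
    induction u with
    | zero => simp
    | succ u ih => rw [Nat.mul_succ, pow_add, pow_mul, ih, hxh]
  have hbr : ∀ u j : ℕ, φ (X ^ q ^ (h * u + j) - X) = φ (X ^ q ^ j - X) := by
    intro u j
    rw [map_sub, map_sub, map_pow, map_pow]
    congr 1
    rw [pow_add, pow_mul, hxt u]
  have hbrt : ∀ u : ℕ, φ (X ^ q ^ (h * u) - X) = 0 := by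
    intro u
    rw [map_sub, map_pow, hxt u, sub_self]
  set I : Ideal (Polynomial ℤ) := Ideal.span {(X : Polynomial ℤ) ^ N - 1} with hI
  set π := Ideal.Quotient.mk I with hπ
  set y : Polynomial ℤ ⧸ I := π X with hy
  have hyN : y ^ N = 1 := by
    have h0 : π ((X : Polynomial ℤ) ^ N - 1) = 0 :=
      Ideal.Quotient.eq_zero_iff_mem.mpr (Ideal.subset_span rfl)
    rw [map_sub, map_pow, map_one, sub_eq_zero] at h0
    exact h0
  have hymod : ∀ k : ℕ, y ^ k = y ^ (k % N) := by
    intro k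
    conv_lhs => rw [← Nat.div_add_mod k N]
    rw [pow_add, pow_mul, hyN, one_pow, one_mul]
  set w : (Polynomial Fq ⧸ Ideal.span {℘}) → Polynomial ℤ ⧸ I :=
    fun ζ => ∑ j ∈ Finset.range N, if ζ = ↑(𝔮 ^ (j : ℤ)) then y ^ j else 0 with hw
  haveI : Fact (Irreducible ℘) := ⟨hirr⟩
  haveI := PrincipalIdealRing.isMaximal_of_irreducible hirr
  letI : Field (Polynomial Fq ⧸ Ideal.span {℘}) := Ideal.Quotient.field _
  have hw0 : w 0 = 0 := by
    rw [hw]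
    apply Finset.sum_eq_zero
    intro j _
    rw [if_neg]
    exact fun hc => (Units.ne_zero _) hc.symm
  have hwpow : ∀ j : ℕ, j < N → w ↑(𝔮 ^ j) = y ^ j := by
    intro j hj
    simp only [hw]
    rw [Finset.sum_eq_single j]
    · rw [if_pos (by rw [zpow_natCast])]
    · intro j' hj' hne
      rw [Finset.mem_range] at hj'
      rw [if_neg]
      intro hcon
      apply hne
      have hval : (𝔮 : (Polynomial Fq ⧸ Ideal.span {℘})ˣ) ^ j' = 𝔮 ^ j := by
        apply Units.ext
        rw [← zpow_natCast 𝔮 j']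
        exact hcon.symm
      exact pow_injOn_Iio_orderOf (by rw [horder]; exact Set.mem_Iio.mpr hj')
        (by rw [horder]; exact Set.mem_Iio.mpr hj) hval
    · intro hj''
      exact absurd (Finset.mem_range.mpr hj) hj''
  have hwexp : ∀ u : (Polynomial Fq ⧸ Ideal.span {℘})ˣ, ∃ j : ℕ, j < N ∧ u = 𝔮 ^ j := by
    intro u
    obtain ⟨z, hz⟩ := Subgroup.mem_zpowers_iff.mp (hgen u)
    have h1 : 0 ≤ z % (N : ℤ) := Int.emod_nonneg z (by exact_mod_cast hNpos.ne')
    have h2 : z % (N : ℤ) < (N : ℤ) := Int.emod_lt_of_pos z (by exact_mod_cast hNpos)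
    refine ⟨(z % (N : ℤ)).toNat, by omega, ?_⟩
    rw [← hz]
    have e1 : 𝔮 ^ z = 𝔮 ^ (z % ((orderOf 𝔮 : ℕ) : ℤ)) := (zpow_mod_orderOf 𝔮 z).symm
    rw [e1, horder, ← zpow_natCast, Int.toNat_of_nonneg h1]
  have hwmul : ∀ ζ1 ζ2, w (ζ1 * ζ2) = w ζ1 * w ζ2 := by
    intro ζ1 ζ2
    by_cases h1 : ζ1 = 0
    · rw [h1, zero_mul, hw0, zero_mul]
    by_cases h2 : ζ2 = 0
    · rw [h2, mul_zero, hw0, mul_zero]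
    obtain ⟨u1, hu1⟩ := hunit ζ1 h1
    obtain ⟨u2, hu2⟩ := hunit ζ2 h2
    obtain ⟨j1, hj1, hju1⟩ := hwexp u1
    obtain ⟨j2, hj2, hju2⟩ := hwexp u2
    have e1 : w ζ1 = y ^ j1 := by rw [← hu1, hju1, hwpow j1 hj1]
    have e2 : w ζ2 = y ^ j2 := by rw [← hu2, hju2, hwpow j2 hj2]
    have e12 : ζ1 * ζ2 = ↑(𝔮 ^ ((j1 + j2) % N)) := by
      rw [← hu1, ← hu2, hju1, hju2, ← Units.val_mul, ← pow_add]
      congr 1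
      conv_lhs => rw [← pow_mod_orderOf, horder]
    rw [e12, hwpow _ (Nat.mod_lt _ hNpos), e1, e2, ← pow_add, hymod (j1 + j2)]
  have hGamma : ∀ n : ℕ,
      π (∑ m ∈ Finset.range N, (Polynomial.C (carlitzEps Fq q ℘ 𝔮 (m : ℤ) n : ℤ)) * X ^ m) =
        ∑ m ∈ Finset.range (n + 1), w (φ (carlitzBinom Fq q n m)) := by
    intro n
    rw [map_sum]
    have hterm : ∀ j ∈ Finset.range N,
        π (Polynomial.C (carlitzEps Fq q ℘ 𝔮 (j : ℤ) n : ℤ) * X ^ j) =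
          ∑ m ∈ Finset.range (n + 1),
            if φ (carlitzBinom Fq q n m) = ↑(𝔮 ^ (j : ℤ)) then y ^ j else 0 := by
      intro j _
      have hcount : carlitzEps Fq q ℘ 𝔮 (j : ℤ) n =
          (Finset.filter (fun m => φ (carlitzBinom Fq q n m) = ↑(𝔮 ^ (j : ℤ)))
            (Finset.range (n + 1))).card := by
        rw [carlitzEps, ← hφ]
        rw [show {m : ℕ | m ≤ n ∧ φ (carlitzBinom Fq q n m) = ↑(𝔮 ^ (j : ℤ))} =
          ↑(Finset.filter (fun m => φ (carlitzBinom Fq q n m) = ↑(𝔮 ^ (j : ℤ)))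
            (Finset.range (n + 1))) from ?_]
        · rw [Set.ncard_coe_finset]
        · ext m
          simp [Nat.lt_succ_iff]
      rw [map_mul, map_pow, Polynomial.C_eq_natCast, map_natCast, hcount, Finset.card_filter,
        ← hy]
      push_cast
      rw [Finset.sum_mul]
      apply Finset.sum_congr rfl
      intro m _
      by_cases hc : φ (carlitzBinom Fq q n m) = ↑(𝔮 ^ (j : ℤ))
      · simp [hc]
      · simp [hc]
    rw [Finset.sum_congr rfl hterm, Finset.sum_comm]
  -- digit bookkeeping
  set n1 := Nat.ofDigits B a with hn1def
  set n2 := Nat.ofDigits B b with hn2def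
  have hlena : 0 < a.length := List.length_pos_iff.mpr ha
  have hlenb : 0 < b.length := List.length_pos_iff.mpr hb
  have hpowB : ∀ L : ℕ, B ^ L = q ^ (h * L) := by
    intro L
    rw [hBdef, ← pow_mul]
  have hn1T : n1 < q ^ (h * a.length) := by
    rw [← hpowB, hn1def]
    exact Nat.ofDigits_lt_base_pow_length (by omega) ha'
  have hn2R : n2 < q ^ (h * b.length) := by
    rw [← hpowB, hn2def]
    exact Nat.ofDigits_lt_base_pow_length (by omega) hb'
  have hnab : Nat.ofDigits B (a ++ b) = n1 + q ^ (h * a.length) * n2 := by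
    rw [Nat.ofDigits_append, hpowB]
  have hq2' : 2 ≤ q := hq2
  have hTpos : 0 < q ^ (h * a.length) := Nat.pow_pos (by omega)
  have hnlt : n1 + q ^ (h * a.length) * n2 < q ^ (h * a.length + h * b.length) := by
    rw [pow_add]
    have h1 : q ^ (h * a.length) * (n2 + 1) ≤ q ^ (h * a.length) * q ^ (h * b.length) :=
      Nat.mul_le_mul_left _ hn2R
    rw [Nat.mul_add, Nat.mul_one] at h1
    omega
  -- splitting of the binomial coefficient modulo ℘
  have hsplit : ∀ m1 m2 : ℕ, m1 ≤ n1 → m2 ≤ n2 →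
      φ (carlitzBinom Fq q (n1 + q ^ (h * a.length) * n2) (m1 + q ^ (h * a.length) * m2)) =
        φ (carlitzBinom Fq q n1 m1) * φ (carlitzBinom Fq q n2 m2) := by
    intro m1 m2 hm1 hm2
    have hmul_le : q ^ (h * a.length) * m2 ≤ q ^ (h * a.length) * n2 :=
      Nat.mul_le_mul_left _ hm2
    have hmn : m1 + q ^ (h * a.length) * m2 ≤ n1 + q ^ (h * a.length) * n2 := by omega
    have hksplit : (n1 + q ^ (h * a.length) * n2) - (m1 + q ^ (h * a.length) * m2) =
        (n1 - m1) + q ^ (h * a.length) * (n2 - m2) := by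
      have e : q ^ (h * a.length) * (n2 - m2) + q ^ (h * a.length) * m2 =
          q ^ (h * a.length) * n2 := by
        rw [← Nat.mul_add]
        congr 1
        omega
      omega
    rw [binom_eq hp hqdef hq2' hmn hnlt, hksplit, map_prod, Finset.prod_range_add]
    have hfac1 : (∏ i ∈ Finset.range (h * a.length),
        φ ((X ^ q ^ (i + 1) - X) ^
          crr q (m1 + q ^ (h * a.length) * m2)
            ((n1 - m1) + q ^ (h * a.length) * (n2 - m2)) (i + 1))) =
        φ (carlitzBinom Fq q n1 m1) := by
      rw [binom_eq hp hqdef hq2' hm1 hn1T, map_prod]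
      apply Finset.prod_congr rfl
      intro i hi
      rw [Finset.mem_range] at hi
      rw [crr_low (by omega)]
    have hfac2 : (∏ i ∈ Finset.range (h * b.length),
        φ ((X ^ q ^ (h * a.length + i + 1) - X) ^
          crr q (m1 + q ^ (h * a.length) * m2)
            ((n1 - m1) + q ^ (h * a.length) * (n2 - m2)) (h * a.length + i + 1))) =
        φ (carlitzBinom Fq q n2 m2) := by
      rw [binom_eq hp hqdef hq2' hm2 hn2R, map_prod]
      apply Finset.prod_congr rfl
      intro i hi
      rw [map_pow, map_pow]
      rw [show h * a.length + i + 1 = h * a.length + (i + 1) from by omega]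
      rw [crr_high hq2' _ _ _ _ (by omega) (by omega) (by omega)]
      rw [hbr a.length (i + 1)]
    rw [hfac1, hfac2]
  -- vanishing of the binomial coefficient modulo ℘ in the carry case
  have hsplit0 : ∀ m1 m2 : ℕ, n1 < m1 → m1 < q ^ (h * a.length) → m2 < n2 →
      φ (carlitzBinom Fq q (n1 + q ^ (h * a.length) * n2) (m1 + q ^ (h * a.length) * m2))
        = 0 := by
    intro m1 m2 hgt hm1T hm2
    have hmul_le : q ^ (h * a.length) * (m2 + 1) ≤ q ^ (h * a.length) * n2 :=
      Nat.mul_le_mul_left _ (by omega)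
    rw [Nat.mul_add, Nat.mul_one] at hmul_le
    have hmn : m1 + q ^ (h * a.length) * m2 ≤ n1 + q ^ (h * a.length) * n2 := by omega
    have hksplit : (n1 + q ^ (h * a.length) * n2) - (m1 + q ^ (h * a.length) * m2) =
        (q ^ (h * a.length) + n1 - m1) + q ^ (h * a.length) * (n2 - m2 - 1) := by
      have e : q ^ (h * a.length) * (n2 - m2 - 1) + q ^ (h * a.length) * (m2 + 1) =
          q ^ (h * a.length) * n2 := by
        rw [← Nat.mul_add]
        congr 1
        omega
      have e2 : q ^ (h * a.length) * (m2 + 1) = q ^ (h * a.length) * m2 + q ^ (h * a.length) := by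
        rw [Nat.mul_add, Nat.mul_one]
      omega
    rw [binom_eq hp hqdef hq2' hmn hnlt, hksplit, map_prod]
    apply Finset.prod_eq_zero (i := h * a.length - 1)
    · rw [Finset.mem_range]
      have : 0 < h * a.length := by positivity
      omega
    · rw [show h * a.length - 1 + 1 = h * a.length from by
        have : 0 < h * a.length := by positivity
        omega]
      rw [crr_boundary hq2' _ _ _ hm1T (by omega) (by omega), pow_one, hbrt a.length]
  -- the main computation
  have hzero_gt : ∀ n m : ℕ, n < m → w (φ (carlitzBinom Fq q n m)) = 0 := by
    intro n m hnm
    rw [carlitzBinom, if_neg (by omega), map_zero, hw0]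
  have hmain : (∑ m ∈ Finset.range ((n1 + q ^ (h * a.length) * n2) + 1),
      w (φ (carlitzBinom Fq q (n1 + q ^ (h * a.length) * n2) m)))
      = (∑ m ∈ Finset.range (n1 + 1), w (φ (carlitzBinom Fq q n1 m))) *
        (∑ m ∈ Finset.range (n2 + 1), w (φ (carlitzBinom Fq q n2 m))) := by
    have hext : (∑ m ∈ Finset.range ((n1 + q ^ (h * a.length) * n2) + 1),
        w (φ (carlitzBinom Fq q (n1 + q ^ (h * a.length) * n2) m)))
        = ∑ m ∈ Finset.range (q ^ (h * a.length) * (n2 + 1)),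
            w (φ (carlitzBinom Fq q (n1 + q ^ (h * a.length) * n2) m)) := by
      apply Finset.sum_subset
      · apply Finset.range_subset_range.mpr
        rw [Nat.mul_add, Nat.mul_one]
        omega
      · intro m _ hm
        rw [Finset.mem_range] at hm
        push_neg at hm
        exact hzero_gt _ _ (by omega)
    rw [hext, CEpsAux.sum_range_mul_eq]
    calc (∑ j ∈ Finset.range (n2 + 1), ∑ i ∈ Finset.range (q ^ (h * a.length)),
        w (φ (carlitzBinom Fq q (n1 + q ^ (h * a.length) * n2)
          (i + q ^ (h * a.length) * j))))
        = ∑ j ∈ Finset.range (n2 + 1), ∑ i ∈ Finset.range (q ^ (h * a.length)),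
            w (φ (carlitzBinom Fq q n1 i)) * w (φ (carlitzBinom Fq q n2 j)) := by
          apply Finset.sum_congr rfl
          intro j hj
          apply Finset.sum_congr rfl
          intro i hi
          rw [Finset.mem_range, Nat.lt_succ_iff] at hj
          rw [Finset.mem_range] at hi
          by_cases hle : i ≤ n1
          · rw [hsplit i j hle hj, hwmul]
          · push_neg at hle
            rw [hzero_gt n1 i hle, zero_mul]
            by_cases hj2 : j = n2
            · subst hj2
              apply hzero_gt
              omega
            · rw [hsplit0 i j hle hi (by omega), hw0]
      _ = (∑ i ∈ Finset.range (q ^ (h * a.length)), w (φ (carlitzBinom Fq q n1 i))) *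
            (∑ j ∈ Finset.range (n2 + 1), w (φ (carlitzBinom Fq q n2 j))) := by
          simp only [← Finset.sum_mul]
          rw [← Finset.mul_sum]
      _ = (∑ m ∈ Finset.range (n1 + 1), w (φ (carlitzBinom Fq q n1 m))) *
            (∑ m ∈ Finset.range (n2 + 1), w (φ (carlitzBinom Fq q n2 m))) := by
          congr 1
          symm
          apply Finset.sum_subset
          · exact Finset.range_subset_range.mpr (by omega)
          · intro i _ hi
            rw [Finset.mem_range] at hi
            exact hzero_gt n1 i (by omega)
  refine Ideal.mem_span_singleton.mp (Ideal.Quotient.eq_zero_iff_mem.mp ?_)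
  rw [← hπ, map_sub, map_mul, hGamma, hGamma, hGamma, hnab, hmain, sub_self]
end
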